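/- arXiv:1706.02858 — 8 statements merged into one kernel-verified Lean document; each statement's English description precedes it below -/
import Mathlib

section
/- Let $G:\mathbb{N}\to[0,1]$ be nonincreasing with $\liminf_{j\to\infty} j\,G(j) = l > 1$, let $p \in (0,1]$ with $p > 1/l$, and set $g(j) = 1 - p\,G(j)$. Then the series $\sum_{i=1}^{\infty} \prod_{l=1}^{i-1} g(l)$ converges. -/
open Filter
open scoped ENNReal

/-- If `G : ℕ → [0,1]` is nonincreasing with
`liminf_j j·G(j) = l > 1`, `p ∈ (0,1]` with `p > 1/l`, and `g(j) = 1 - p·G(j)`,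
then `∑_{i≥1} ∏_{l=1}^{i-1} g(l)` converges. -/
theorem stmt0 (G : ℕ → ℝ) (hG01 : ∀ j, G j ∈ Set.Icc (0 : ℝ) 1)
    (hmono : Antitone G) (l : ℝ≥0∞)
    (hliminf : Filter.atTop.liminf
      (fun j : ℕ => (j : ℝ≥0∞) * ENNReal.ofReal (G j)) = l)
    (hl : 1 < l) (p : ℝ) (hp : p ∈ Set.Ioc (0 : ℝ) 1)
    (hpl : 1 / l < ENNReal.ofReal p) :
    Summable (fun i : ℕ => ∏ l' ∈ Finset.Ico 1 i, (1 - p * G l')) := by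
  obtain ⟨hp0, hp1⟩ := hp
  -- choose r between max 1 (ofReal p)⁻¹ and l
  have hpinv : (ENNReal.ofReal p)⁻¹ < l := by
    rw [← ENNReal.inv_lt_iff_inv_lt]
    simpa [one_div] using hpl
  obtain ⟨r, hr1, hr2⟩ := exists_between (max_lt hl hpinv)
  have hrtop : r ≠ ⊤ := (hr2.trans_le le_top).ne
  set c : ℝ := p * r.toReal with hc
  have hptop : (ENNReal.ofReal p)⁻¹ ≠ ⊤ :=
    ENNReal.inv_ne_top.mpr (ENNReal.ofReal_pos.mpr hp0).ne'
  have hc1 : 1 < c := by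
    have h1 : (ENNReal.ofReal p)⁻¹.toReal < r.toReal :=
      ENNReal.toReal_strict_mono hrtop (lt_of_le_of_lt (le_max_right _ _) hr1)
    rw [ENNReal.toReal_inv, ENNReal.toReal_ofReal hp0.le] at h1
    calc (1 : ℝ) = p * p⁻¹ := (mul_inv_cancel₀ hp0.ne').symm
      _ < p * r.toReal := (mul_lt_mul_iff_right₀ hp0).mpr h1
  have hc0 : 0 < c := lt_trans one_pos hc1
  -- eventual lower bound on j * G j
  have hev : ∀ᶠ j : ℕ in atTop, r.toReal < (j : ℝ) * G j := by
    have hlt : r < Filter.atTop.liminf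
        (fun j : ℕ => (j : ℝ≥0∞) * ENNReal.ofReal (G j)) := hliminf ▸ hr2
    filter_upwards [Filter.eventually_lt_of_lt_liminf hlt] with j hj
    have hGj := (hG01 j).1
    rw [show ((j : ℝ≥0∞) * ENNReal.ofReal (G j)) = ENNReal.ofReal ((j : ℝ) * G j) by
      rw [ENNReal.ofReal_mul (by positivity), ENNReal.ofReal_natCast]] at hj
    exact (ENNReal.lt_ofReal_iff_toReal_lt hrtop).mp hj
  obtain ⟨N₀, hN₀⟩ := Filter.eventually_atTop.mp hev
  set N : ℕ := max N₀ 1 with hN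
  have hN1 : 1 ≤ N := le_max_right _ _
  have hNr : (1 : ℝ) ≤ N := by exact_mod_cast hN1
  -- factors are in [0,1]
  have hfac : ∀ j : ℕ, 0 ≤ 1 - p * G j ∧ 1 - p * G j ≤ 1 := by
    intro j
    obtain ⟨h0, h1⟩ := hG01 j
    constructor
    · nlinarith
    · nlinarith
  -- key per-term bound for j ≥ N
  have hkey : ∀ j : ℕ, N ≤ j → 1 - p * G j ≤ 1 - c / j := by
    intro j hj
    have hj1 : 1 ≤ j := le_trans hN1 hj
    have hjpos : (0 : ℝ) < j := by exact_mod_cast hj1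
    have h := hN₀ j (le_trans (le_max_left _ _) hj)
    have hGj : r.toReal / j < G j := by
      rw [div_lt_iff₀ hjpos]
      linarith [mul_comm (G j) (j : ℝ)]
    have : c / j < p * G j := by
      rw [hc, mul_div_assoc]
      exact (mul_lt_mul_iff_right₀ hp0).mpr hGj
    linarith
  -- bound on product tail
  have hprodbound : ∀ i : ℕ, N ≤ i →
      (∏ l' ∈ Finset.Ico 1 i, (1 - p * G l')) ≤ Real.exp (c * Real.log N) * (i : ℝ) ^ (-c) := by
    intro i hNi
    have hipos : (0 : ℝ) < i := by
      have : 1 ≤ i := le_trans hN1 hNi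
      exact_mod_cast this
    rw [← Finset.prod_Ico_consecutive _ hN1 hNi]
    have h1 : (∏ l' ∈ Finset.Ico 1 N, (1 - p * G l')) ≤ 1 :=
      Finset.prod_le_one (fun j _ => (hfac j).1) (fun j _ => (hfac j).2)
    have h1' : 0 ≤ ∏ l' ∈ Finset.Ico N i, (1 - p * G l') :=
      Finset.prod_nonneg (fun j _ => (hfac j).1)
    calc (∏ l' ∈ Finset.Ico 1 N, (1 - p * G l')) * ∏ l' ∈ Finset.Ico N i, (1 - p * G l')
        ≤ ∏ l' ∈ Finset.Ico N i, (1 - p * G l') :=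
          mul_le_of_le_one_left h1' h1
      _ ≤ ∏ l' ∈ Finset.Ico N i, Real.exp (-(c / l')) := by
          apply Finset.prod_le_prod (fun j _ => (hfac j).1)
          intro j hj
          have hj' := (Finset.mem_Ico.mp hj).1
          calc 1 - p * G j ≤ 1 - c / j := hkey j hj'
            _ ≤ Real.exp (-(c / j)) := by
                have := Real.add_one_le_exp (-(c / (j : ℝ)))
                linarith
      _ = Real.exp (∑ l' ∈ Finset.Ico N i, -(c / l')) := (Real.exp_sum _ _).symm
      _ ≤ Real.exp (c * Real.log N) * (i : ℝ) ^ (-c) := by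
          rw [Real.rpow_def_of_pos hipos, ← Real.exp_add]
          apply Real.exp_le_exp.mpr
          have hlog : Real.log i - Real.log N ≤ ∑ l' ∈ Finset.Ico N i, 1 / (l' : ℝ) := by
            have htel : ∑ l' ∈ Finset.Ico N i,
                (Real.log ((l' : ℝ) + 1) - Real.log l') = Real.log i - Real.log N := by
              have hr1' : ∀ n : ℕ, ∑ k ∈ Finset.range n,
                  (Real.log ((k : ℝ) + 1) - Real.log k) = Real.log n := by
                intro n
                have h := Finset.sum_range_sub (fun k : ℕ => Real.log (k : ℝ)) n
                push_cast at h
                simpa using h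
              rw [Finset.sum_Ico_eq_sub _ hNi, hr1', hr1']
            rw [← htel]
            apply Finset.sum_le_sum
            intro j hj
            have hj1 : 1 ≤ j := le_trans hN1 (Finset.mem_Ico.mp hj).1
            have hjpos : (0 : ℝ) < j := by exact_mod_cast hj1
            have hlog2 : Real.log (((j : ℝ) + 1) / j) ≤ ((j : ℝ) + 1) / j - 1 :=
              Real.log_le_sub_one_of_pos (by positivity)
            rw [Real.log_div (by positivity) (ne_of_gt hjpos)] at hlog2
            have : ((j : ℝ) + 1) / j - 1 = 1 / j := by field_simp; ring
            linarith
          have hsum : ∑ l' ∈ Finset.Ico N i, -(c / (l' : ℝ))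
              = -(c * ∑ l' ∈ Finset.Ico N i, 1 / (l' : ℝ)) := by
            rw [Finset.mul_sum, ← Finset.sum_neg_distrib]
            apply Finset.sum_congr rfl
            intro j _
            rw [mul_one_div]
          rw [hsum]
          nlinarith [hlog, hc0]
  -- conclude summability
  rw [← summable_nat_add_iff N]
  have hsum : Summable (fun i : ℕ => Real.exp (c * Real.log N) * ((i : ℝ) ^ (-c))) := by
    apply Summable.mul_left
    exact (Real.summable_one_div_nat_rpow.mpr hc1).congr fun i => by
      rw [Real.rpow_neg (Nat.cast_nonneg i), one_div]
  have hsum2 := (summable_nat_add_iff N).mpr hsum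
  apply Summable.of_nonneg_of_le _ _ hsum2
  · intro n
    exact Finset.prod_nonneg (fun j _ => (hfac j).1)
  · intro n
    exact hprodbound (n + N) (Nat.le_add_left N n)
end

section
/- Let $G:\mathbb{N}\to[0,1]$ be nonincreasing with $\liminf_{j\to\infty} j\,G(j) = l > 1$, let $p \in (0,1]$ with $p > 1/l$, and set $g(j) = 1 - p\,G(j)$. Then the double series $\sum_{i=1}^{\infty} \sum_{k=1}^{i-1} G(k) \prod_{l=1, l\ne k}^{i-1} g(l)$ converges. -/
open Filter
open scoped ENNReal

/-- `x * exp (-(t*x)) ≤ 1/t` for `t > 0`, `x ≥ 0`. -/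
private lemma xexp_le {x t : ℝ} (hx : 0 ≤ x) (ht : 0 < t) :
    x * Real.exp (-(t * x)) ≤ 1 / t := by
  have h1 : t * x ≤ Real.exp (t * x) := by
    have := Real.add_one_le_exp (t * x); linarith
  have h2 : Real.exp (-(t * x)) = (Real.exp (t * x))⁻¹ := Real.exp_neg _
  have hexp : 0 < Real.exp (t * x) := Real.exp_pos _
  rw [h2]
  rw [le_div_iff₀ ht]
  have h3 : t * x * (Real.exp (t * x))⁻¹ ≤ Real.exp (t * x) * (Real.exp (t * x))⁻¹ :=
    mul_le_mul_of_nonneg_right h1 (by positivity)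
  rw [mul_inv_cancel₀ (ne_of_gt hexp)] at h3
  have h4 : x * (Real.exp (t * x))⁻¹ * t = t * x * (Real.exp (t * x))⁻¹ := by ring
  linarith

/-- harmonic sum lower bound by log. -/
private lemma log_le_harm {m : ℕ} (hm : 1 ≤ m) : ∀ i, m ≤ i →
    Real.log i - Real.log m ≤ ∑ l ∈ Finset.Ico m i, (1 : ℝ) / l := by
  intro i hi
  induction i, hi using Nat.le_induction with
  | base => simp
  | succ i hi ih =>
    rw [Finset.sum_Ico_succ_top hi]
    have hi1 : (1 : ℝ) ≤ (i : ℝ) := by exact_mod_cast hm.trans hi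
    have hipos : (0 : ℝ) < i := by linarith
    have h1 : Real.log ((i : ℝ) + 1) - Real.log i ≤ 1 / i := by
      rw [← Real.log_div (by positivity) (ne_of_gt hipos)]
      have heq : ((i : ℝ) + 1) / i = 1 + 1 / i := by field_simp
      rw [heq]
      have h2 := Real.add_one_le_exp (1 / (i : ℝ))
      calc Real.log (1 + 1 / (i : ℝ)) ≤ Real.log (Real.exp (1 / i)) := by
            apply Real.log_le_log (by positivity); linarith
        _ = 1 / i := Real.log_exp _
    push_cast
    linarith

set_option maxHeartbeats 1000000 in
/-- Under the same hypotheses as Statement 0, the double series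
`∑_{i≥1} ∑_{k=1}^{i-1} G(k) ∏_{l=1, l≠k}^{i-1} g(l)` converges, where
`g(l) = 1 - p·G(l)`. -/
theorem stmt1 (G : ℕ → ℝ) (hG01 : ∀ j, G j ∈ Set.Icc (0 : ℝ) 1)
    (hmono : Antitone G) (l : ℝ≥0∞)
    (hliminf : Filter.atTop.liminf
      (fun j : ℕ => (j : ℝ≥0∞) * ENNReal.ofReal (G j)) = l)
    (hl : 1 < l) (p : ℝ) (hp : p ∈ Set.Ioc (0 : ℝ) 1)
    (hpl : 1 / l < ENNReal.ofReal p) :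
    Summable (fun i : ℕ =>
      ∑ k ∈ Finset.Ico 1 i, G k * ∏ l' ∈ (Finset.Ico 1 i).erase k, (1 - p * G l')) := by
  obtain ⟨hp0, hp1⟩ := hp
  have hG0 : ∀ j, 0 ≤ G j := fun j => (hG01 j).1
  have hG1 : ∀ j, G j ≤ 1 := fun j => (hG01 j).2
  have hpG1 : ∀ j, p * G j ≤ 1 := fun j =>
    mul_le_one₀ hp1 (hG0 j) (hG1 j)
  have hg0 : ∀ j, 0 ≤ 1 - p * G j := fun j => by linarith [hpG1 j]
  -- Step 1: find a real c with 1/p < c and ofReal c < l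
  have hinv : (ENNReal.ofReal p)⁻¹ < l := by
    rw [ENNReal.inv_lt_iff_inv_lt]
    rwa [one_div] at hpl
  have hinv' : ENNReal.ofReal (1 / p) < l := by
    rwa [one_div, ENNReal.ofReal_inv_of_pos hp0]
  obtain ⟨c, hc0, hc1, hc2⟩ := ENNReal.lt_iff_exists_real_btwn.1 hinv'
  have hcp : 1 / p < c := by
    by_contra h
    push_neg at h
    exact absurd (ENNReal.ofReal_le_ofReal h) (not_le.2 hc1)
  have hcpos : 0 < c := lt_trans (by positivity) hcp
  set α : ℝ := p * c with hα_def
  have hα1 : 1 < α := by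
    rw [div_lt_iff₀ hp0] at hcp
    calc (1 : ℝ) < c * p := hcp
      _ = α := by ring
  -- Step 2: eventual lower bound on j * G j
  have hc2' : ENNReal.ofReal c
      < Filter.atTop.liminf (fun j : ℕ => (j : ℝ≥0∞) * ENNReal.ofReal (G j)) := by
    rw [hliminf]; exact hc2
  have hev : ∀ᶠ j : ℕ in atTop, ENNReal.ofReal c < (j : ℝ≥0∞) * ENNReal.ofReal (G j) :=
    Filter.eventually_lt_of_lt_liminf hc2' 
  obtain ⟨m₁, hm₁⟩ := Filter.eventually_atTop.1 hev
  set m : ℕ := max m₁ 1 with hm_def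
  have hm1 : 1 ≤ m := le_max_right _ _
  have hkey : ∀ j, m ≤ j → c ≤ (j : ℝ) * G j := by
    intro j hj
    have h := hm₁ j (le_trans (le_max_left _ _) hj)
    by_contra hcon
    push_neg at hcon
    have : (j : ℝ≥0∞) * ENNReal.ofReal (G j) ≤ ENNReal.ofReal c := by
      calc (j : ℝ≥0∞) * ENNReal.ofReal (G j)
          = ENNReal.ofReal ((j : ℝ) * G j) := by
            rw [ENNReal.ofReal_mul (by positivity), ENNReal.ofReal_natCast]
        _ ≤ ENNReal.ofReal c := ENNReal.ofReal_le_ofReal hcon.le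
    exact absurd h (not_lt.2 this)
  -- Step 3: definitions
  set S : ℕ → ℝ := fun i => ∑ l' ∈ Finset.Ico 1 i, G l' with hS_def
  set a : ℕ → ℝ := fun i =>
      ∑ k ∈ Finset.Ico 1 i, G k * ∏ l' ∈ (Finset.Ico 1 i).erase k, (1 - p * G l')
    with ha_def
  have hS0 : ∀ i, 0 ≤ S i := fun i => Finset.sum_nonneg fun j _ => hG0 j
  have ha0 : ∀ i, 0 ≤ a i := by
    intro i
    apply Finset.sum_nonneg
    intro k _
    exact mul_nonneg (hG0 k) (Finset.prod_nonneg fun j _ => hg0 j)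
  -- Step 4: a i ≤ e * exp(-(p * S i)) * S i
  have hprod : ∀ i, ∀ k ∈ Finset.Ico 1 i,
      ∏ l' ∈ (Finset.Ico 1 i).erase k, (1 - p * G l')
        ≤ Real.exp 1 * Real.exp (-(p * S i)) := by
    intro i k hk
    have h1 : ∏ l' ∈ (Finset.Ico 1 i).erase k, (1 - p * G l')
        ≤ ∏ l' ∈ (Finset.Ico 1 i).erase k, Real.exp (-(p * G l')) := by
      apply Finset.prod_le_prod (fun j _ => hg0 j)
      intro j _
      have := Real.add_one_le_exp (-(p * G j))
      linarith
    rw [← Real.exp_sum] at h1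
    have h2 : ∑ l' ∈ (Finset.Ico 1 i).erase k, (p * G l') = p * S i - p * G k := by
      have h3 : ∑ l' ∈ (Finset.Ico 1 i).erase k, (p * G l') + p * G k
          = ∑ l' ∈ Finset.Ico 1 i, (p * G l') := Finset.sum_erase_add _ _ hk
      have h4 : ∑ l' ∈ Finset.Ico 1 i, p * G l' = p * S i := by
        rw [hS_def, Finset.mul_sum]
      linarith
    have h5 : ∑ l' ∈ (Finset.Ico 1 i).erase k, (-(p * G l'))
        = -(p * S i) + p * G k := by
      rw [Finset.sum_neg_distrib, h2]; ring
    rw [h5, Real.exp_add] at h1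
    calc ∏ l' ∈ (Finset.Ico 1 i).erase k, (1 - p * G l')
        ≤ Real.exp (-(p * S i)) * Real.exp (p * G k) := h1
      _ ≤ Real.exp (-(p * S i)) * Real.exp 1 := by
          apply mul_le_mul_of_nonneg_left (Real.exp_le_exp.2 (hpG1 k)) (Real.exp_nonneg _)
      _ = Real.exp 1 * Real.exp (-(p * S i)) := by ring
  have hA : ∀ i, a i ≤ Real.exp 1 * Real.exp (-(p * S i)) * S i := by
    intro i
    calc a i ≤ ∑ k ∈ Finset.Ico 1 i, G k * (Real.exp 1 * Real.exp (-(p * S i))) := by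
          apply Finset.sum_le_sum
          intro k hk
          exact mul_le_mul_of_nonneg_left (hprod i k hk) (hG0 k)
      _ = Real.exp 1 * Real.exp (-(p * S i)) * S i := by
          rw [← Finset.sum_mul]; ring
  -- Step 5: parameters β, θ
  set β : ℝ := (1 + α) / 2 with hβ_def
  have hβ1 : 1 < β := by rw [hβ_def]; linarith
  have hβα : β < α := by rw [hβ_def]; linarith
  set θ : ℝ := β / α with hθ_def
  have hαpos : (0 : ℝ) < α := by linarith
  have hθpos : 0 < θ := by positivity
  have hθ1 : θ < 1 := (div_lt_one hαpos).2 hβα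
  have hθα : θ * α = β := by
    rw [hθ_def]; field_simp
  -- Step 6: S i * exp(-(p S i)) ≤ C * exp(-(θ p S i))
  have hB : ∀ i, Real.exp (-(p * S i)) * S i
      ≤ (1 / ((1 - θ) * p)) * Real.exp (-(θ * p * S i)) := by
    intro i
    have hsplit : -(p * S i) = -((1 - θ) * p * S i) + -(θ * p * S i) := by ring
    rw [hsplit, Real.exp_add]
    have h1 : S i * Real.exp (-((1 - θ) * p * S i)) ≤ 1 / ((1 - θ) * p) := by
      have := xexp_le (hS0 i) (mul_pos (by linarith : (0:ℝ) < 1 - θ) hp0)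
      calc S i * Real.exp (-((1 - θ) * p * S i))
          = S i * Real.exp (-(((1 - θ) * p) * S i)) := by ring_nf
        _ ≤ 1 / ((1 - θ) * p) := this
    calc Real.exp (-((1 - θ) * p * S i)) * Real.exp (-(θ * p * S i)) * S i
        = (S i * Real.exp (-((1 - θ) * p * S i))) * Real.exp (-(θ * p * S i)) := by ring
      _ ≤ (1 / ((1 - θ) * p)) * Real.exp (-(θ * p * S i)) := by
          apply mul_le_mul_of_nonneg_right h1 (Real.exp_nonneg _)
  -- Step 7: for i ≥ m, β * (log i - log m) ≤ θ * p * S i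
  have hC : ∀ i, m ≤ i → β * (Real.log i - Real.log m) ≤ θ * p * S i := by
    intro i hi
    have hsub : Finset.Ico m i ⊆ Finset.Ico 1 i := by
      apply Finset.Ico_subset_Ico hm1 le_rfl
    have h1 : ∑ l' ∈ Finset.Ico m i, G l' ≤ S i :=
      Finset.sum_le_sum_of_subset_of_nonneg hsub fun j _ _ => hG0 j
    have h2 : ∀ j ∈ Finset.Ico m i, c * (1 / (j : ℝ)) ≤ G j := by
      intro j hj
      obtain ⟨hj1, _⟩ := Finset.mem_Ico.1 hj
      have hjpos : (0 : ℝ) < j := by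
        have : 1 ≤ j := le_trans hm1 hj1
        exact_mod_cast this
      have := hkey j hj1
      rw [mul_one_div, div_le_iff₀ hjpos]
      linarith [this]
    have h3 : c * ∑ l' ∈ Finset.Ico m i, (1 : ℝ) / l' ≤ ∑ l' ∈ Finset.Ico m i, G l' := by
      rw [Finset.mul_sum]
      exact Finset.sum_le_sum h2
    have h4 := log_le_harm hm1 i hi
    have h5 : c * (Real.log i - Real.log m) ≤ S i := by
      have hlog0 : 0 ≤ Real.log i - Real.log m := by
        have : Real.log m ≤ Real.log i := by
          apply Real.log_le_log (by exact_mod_cast hm1) (by exact_mod_cast hi)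
        linarith
      calc c * (Real.log i - Real.log m)
          ≤ c * ∑ l' ∈ Finset.Ico m i, (1 : ℝ) / l' :=
            mul_le_mul_of_nonneg_left h4 hcpos.le
        _ ≤ ∑ l' ∈ Finset.Ico m i, G l' := h3
        _ ≤ S i := h1
    calc β * (Real.log i - Real.log m) = θ * (α * (Real.log i - Real.log m)) := by
          rw [← hθα]; ring
      _ = θ * (p * (c * (Real.log i - Real.log m))) := by rw [hα_def]; ring
      _ ≤ θ * (p * S i) := by
          apply mul_le_mul_of_nonneg_left _ hθpos.le
          exact mul_le_mul_of_nonneg_left h5 hp0.le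
      _ = θ * p * S i := by ring
  -- Step 8: combine, for i ≥ m : a i ≤ K * i^(-β)
  set K : ℝ := Real.exp 1 * (1 / ((1 - θ) * p)) * (m : ℝ) ^ β with hK_def
  have hbound : ∀ i, m ≤ i → a i ≤ K * (i : ℝ) ^ (-β) := by
    intro i hi
    have hipos : (0 : ℝ) < i := by
      have : 1 ≤ i := le_trans hm1 hi
      exact_mod_cast this
    have hmpos : (0 : ℝ) < m := by exact_mod_cast hm1
    have h1 : Real.exp (-(θ * p * S i)) ≤ Real.exp (-(β * (Real.log i - Real.log m))) :=
      Real.exp_le_exp.2 (by linarith [hC i hi])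
    have h2 : Real.exp (-(β * (Real.log i - Real.log m)))
        = (m : ℝ) ^ β * (i : ℝ) ^ (-β) := by
      rw [Real.rpow_def_of_pos hmpos, Real.rpow_def_of_pos hipos, ← Real.exp_add]
      ring_nf
    calc a i ≤ Real.exp 1 * Real.exp (-(p * S i)) * S i := hA i
      _ = Real.exp 1 * (Real.exp (-(p * S i)) * S i) := by ring
      _ ≤ Real.exp 1 * ((1 / ((1 - θ) * p)) * Real.exp (-(θ * p * S i))) := by
          apply mul_le_mul_of_nonneg_left (hB i) (Real.exp_nonneg _)
      _ ≤ Real.exp 1 * ((1 / ((1 - θ) * p)) * ((m : ℝ) ^ β * (i : ℝ) ^ (-β))) := by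
          apply mul_le_mul_of_nonneg_left _ (Real.exp_nonneg _)
          apply mul_le_mul_of_nonneg_left _
            (by have h1θ : (0:ℝ) < 1 - θ := by linarith
                positivity)
          rw [← h2]; exact h1
      _ = K * (i : ℝ) ^ (-β) := by rw [hK_def]; ring
  -- Step 9: conclude summability
  rw [← summable_nat_add_iff (f := a) m]
  apply Summable.of_nonneg_of_le (fun n => ha0 (n + m))
    (fun n => hbound (n + m) (Nat.le_add_left m n))
  have hsum : Summable (fun i : ℕ => (i : ℝ) ^ (-β)) :=
    Real.summable_nat_rpow.2 (by linarith)
  have hsum2 : Summable (fun n : ℕ => ((n + m : ℕ) : ℝ) ^ (-β)) :=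
    (summable_nat_add_iff m).2 hsum
  exact hsum2.mul_left K
end

section
/- Let $(X_i)_{i\ge 1}$ be i.i.d. Bernoulli($p$) and $(\rho_i)_{i\ge 1}$ i.i.d. $\mathbb{N}$-valued, independent of the $X_i$'s. Let $B_i$ be the event that there do NOT exist two distinct indices $j,k \le i$ with $X_j = X_k = 1$, $j + \rho_j \ge i$, and $k + \rho_k \ge i$ (i.e., site $i$ is covered by at most one open source). Then $\mathbb{P}(B_i) = \prod_{l=1}^{i-1} g_p(l)\Big[ g_p(0) + p + p(1-p)\sum_{k=1}^{i-1} \frac{G(k)}{g_p(k)} \Big]$, where $G(l) = \mathbb{P}(\rho \ge l)$ and $g_p(l) = 1 - pG(l)$. -/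
open MeasureTheory ProbabilityTheory Filter
open scoped ENNReal

lemma stmt7_alg {p : ℝ} (hp0 : 0 < p) (hp1 : p ≤ 1) (G g : ℕ → ℝ)
    (hG0 : G 0 = 1) (hGnn : ∀ k, 0 ≤ G k) (hG1 : ∀ k, G k ≤ 1)
    (hg : ∀ n, g n = 1 - p * G n) (i : ℕ) (hi : 1 ≤ i) :
    (∏ k ∈ Finset.range i, g k) +
      ∑ k ∈ Finset.range i, p * G k * ∏ m ∈ (Finset.range i).erase k, g m =
    (∏ l ∈ Finset.Ico 1 i, g l) *
      (g 0 + p + p * (1 - p) * ∑ k ∈ Finset.Ico 1 i, G k / g k) := by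
  have h0ni : (0 : ℕ) ∉ Finset.Ico 1 i := by simp
  have hrange : Finset.range i = insert 0 (Finset.Ico 1 i) := by
    ext x; simp [Finset.mem_range, Finset.mem_Ico]; omega
  have hg0 : g 0 = 1 - p := by rw [hg, hG0, mul_one]
  rw [hrange, Finset.prod_insert h0ni, Finset.sum_insert h0ni,
    Finset.erase_insert h0ni]
  have hterm : ∀ k ∈ Finset.Ico 1 i,
      p * G k * ∏ m ∈ (insert 0 (Finset.Ico 1 i)).erase k, g m =
      (∏ l ∈ Finset.Ico 1 i, g l) * (p * (1 - p)) * (G k / g k) := by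
    intro k hk
    have hk0 : (0 : ℕ) ≠ k := by
      intro h; exact h0ni (h ▸ hk)
    rw [Finset.erase_insert_of_ne hk0,
      Finset.prod_insert (fun h => h0ni (Finset.erase_subset _ _ h)), hg0]
    by_cases hgk : g k = 0
    · have hpGk : p * G k = 1 := by
        have := hg k; rw [hgk] at this; linarith
      have hp1' : p = 1 := by nlinarith [hGnn k, hG1 k]
      rw [hp1']; ring_nf
    · rw [← Finset.mul_prod_erase (Finset.Ico 1 i) g hk]
      field_simp
  rw [Finset.sum_congr rfl hterm, ← Finset.mul_sum, hG0]
  ring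

/-- In the one-dimensional firework process among sceptics, the
probability `P(B_i)` that site `i` is covered by at most one open source (no two
distinct `j,k ≤ i` with `X_j = X_k = 1`, `j + ρ_j ≥ i`, `k + ρ_k ≥ i`) equals
`∏_{l=1}^{i-1} g_p(l) · [g_p(0) + p + p(1-p) ∑_{k=1}^{i-1} G(k)/g_p(k)]`,
where `G(l) = P(ρ ≥ l)` and `g_p(l) = 1 - p·G(l)`. -/
theorem stmt7 {Ω : Type*} [MeasureSpace Ω] [IsProbabilityMeasure (ℙ : Measure Ω)]
    (p : ℝ) (hp : p ∈ Set.Ioc (0 : ℝ) 1) (X : ℕ → Ω → Bool) (ρ : ℕ → Ω → ℕ)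
    (hXm : ∀ i, Measurable (X i)) (hρm : ∀ i, Measurable (ρ i))
    (hindep : iIndepFun (fun i ω => (X i ω, ρ i ω)) ℙ)
    (hpair : ∀ i, IndepFun (X i) (ρ i) ℙ)
    (hX : ∀ i, ℙ {ω | X i ω = true} = ENNReal.ofReal p)
    (hρ : ∀ i, IdentDistrib (ρ i) (ρ 1) ℙ ℙ)
    (G g : ℕ → ℝ) (hG : ∀ n, G n = (ℙ {ω | n ≤ ρ 1 ω}).toReal)
    (hg : ∀ n, g n = 1 - p * G n)
    (i : ℕ) (hi : 1 ≤ i) :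
    (ℙ {ω | ¬ ∃ j k : ℕ, j ≠ k ∧ 1 ≤ j ∧ j ≤ i ∧ 1 ≤ k ∧ k ≤ i ∧
        X j ω = true ∧ X k ω = true ∧ i ≤ j + ρ j ω ∧ i ≤ k + ρ k ω}).toReal =
      (∏ l ∈ Finset.Ico 1 i, g l) *
        (g 0 + p + p * (1 - p) * ∑ k ∈ Finset.Ico 1 i, G k / g k) := by
  obtain ⟨hp0, hp1⟩ := hp
  -- basic facts about G
  have hGnn : ∀ k, 0 ≤ G k := fun k => (hG k) ▸ ENNReal.toReal_nonneg
  have hG1 : ∀ k, G k ≤ 1 := by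
    intro k
    rw [hG k]
    exact ENNReal.toReal_le_of_le_ofReal zero_le_one (by simpa using prob_le_one)
  have hG0 : G 0 = 1 := by
    have : {ω : Ω | 0 ≤ ρ 1 ω} = Set.univ := by ext ω; simp
    rw [hG 0, this, measure_univ, ENNReal.toReal_one]
  -- the basic events
  set s : Finset ℕ := Finset.Icc 1 i with hs
  set T : ℕ → Set (Bool × ℕ) := fun l => {q : Bool × ℕ | q.1 = true ∧ i ≤ l + q.2} with hT
  set E : ℕ → Set Ω := fun l => (fun ω => (X l ω, ρ l ω)) ⁻¹' T l with hE
  have hEmem : ∀ l ω, ω ∈ E l ↔ (X l ω = true ∧ i ≤ l + ρ l ω) := fun l ω => Iff.rfl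
  have hEmeas : ∀ l, MeasurableSet (E l) :=
    fun l => ((hXm l).prodMk (hρm l)) ((Set.to_countable _).measurableSet)
  -- independence: measure of intersections
  have hmeas : ∀ (C : ℕ → Set Ω), (∀ l ∈ s, C l = E l ∨ C l = (E l)ᶜ) →
      ℙ (⋂ l ∈ s, C l) = ∏ l ∈ s, ℙ (C l) := by
    intro C hC
    refine hindep.meas_biInter (fun l hl => ?_)
    rcases hC l hl with h | h <;> rw [h]
    · exact ⟨T l, (Set.to_countable _).measurableSet, rfl⟩
    · exact ⟨(T l)ᶜ, ((Set.to_countable _).measurableSet).compl, rfl⟩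
  -- probability of E j
  have hθ : ∀ j ∈ s, ℙ (E j) = ENNReal.ofReal (p * G (i - j)) := by
    intro j hj
    have hEj : E j = X j ⁻¹' {true} ∩ ρ j ⁻¹' {n | i - j ≤ n} := by
      ext ω
      simp only [hE, hT, Set.mem_preimage, Set.mem_setOf_eq, Set.mem_inter_iff,
        Set.mem_singleton_iff]
      constructor
      · rintro ⟨h1, h2⟩; exact ⟨h1, by omega⟩
      · rintro ⟨h1, h2⟩; exact ⟨h1, by omega⟩
    rw [hEj, (hpair j).measure_inter_preimage_eq_mul _ _
      (measurableSet_singleton true) ((Set.to_countable _).measurableSet)]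
    have h1 : X j ⁻¹' {true} = {ω | X j ω = true} := rfl
    have h2 : ℙ (ρ j ⁻¹' {n | i - j ≤ n}) = ℙ {ω | i - j ≤ ρ 1 ω} :=
      (hρ j).measure_mem_eq ((Set.to_countable _).measurableSet)
    rw [h1, hX j, h2, ENNReal.ofReal_mul hp0.le]
    congr 1
    rw [hG (i - j), ENNReal.ofReal_toReal (measure_ne_top _ _)]
  -- probability of complement
  have hθc : ∀ j, ℙ ((E j)ᶜ) = 1 - ℙ (E j) := fun j => prob_compl_eq_one_sub (hEmeas j)
  -- the good event decomposes
  set B0 : Set Ω := ⋂ l ∈ s, (E l)ᶜ with hB0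
  set B1 : ℕ → Set Ω := fun j => ⋂ l ∈ s, (if l = j then E l else (E l)ᶜ) with hB1
  have hmemB1 : ∀ j ω, ω ∈ B1 j ↔ ∀ l ∈ s, (if l = j then ω ∈ E l else ω ∉ E l) := by
    intro j ω
    rw [hB1]
    simp only [Set.mem_iInter]
    refine forall₂_congr (fun l hl => ?_)
    by_cases h : l = j <;> simp [h]
  have hsetmem : ∀ j, j ∈ s ↔ 1 ≤ j ∧ j ≤ i := by intro j; simp [hs]
  have hset : {ω : Ω | ¬ ∃ j k : ℕ, j ≠ k ∧ 1 ≤ j ∧ j ≤ i ∧ 1 ≤ k ∧ k ≤ i ∧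
        X j ω = true ∧ X k ω = true ∧ i ≤ j + ρ j ω ∧ i ≤ k + ρ k ω} =
      B0 ∪ ⋃ j ∈ s, B1 j := by
    ext ω
    simp only [Set.mem_setOf_eq, Set.mem_union, Set.mem_iUnion, hB0, Set.mem_iInter,
      Set.mem_compl_iff]
    constructor
    · intro h
      by_cases hex : ∃ j, j ∈ s ∧ ω ∈ E j
      · obtain ⟨j, hj, hEj⟩ := hex
        right
        refine ⟨j, hj, (hmemB1 j ω).2 (fun l hl => ?_)⟩
        by_cases hlj : l = j
        · simp only [if_pos hlj]; exact hlj ▸ hEj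
        · simp only [if_neg hlj]
          intro hEl
          obtain ⟨hl1, hli⟩ := (hsetmem l).1 hl
          obtain ⟨hj1, hji⟩ := (hsetmem j).1 hj
          exact h ⟨l, j, hlj, hl1, hli, hj1, hji, (hEmem l ω).1 hEl |>.1,
            (hEmem j ω).1 hEj |>.1, (hEmem l ω).1 hEl |>.2, (hEmem j ω).1 hEj |>.2⟩
      · left
        intro l hl hEl
        exact hex ⟨l, hl, hEl⟩
    · rintro (h | ⟨j, hj, h⟩) ⟨a, b, hab, ha1, hai, hb1, hbi, hXa, hXb, hra, hrb⟩
      · exact h a ((hsetmem a).2 ⟨ha1, hai⟩) ((hEmem a ω).2 ⟨hXa, hra⟩)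
      · have h' := (hmemB1 j ω).1 h
        rcases ne_or_eq a j with haj | haj
        · have := h' a ((hsetmem a).2 ⟨ha1, hai⟩)
          rw [if_neg haj] at this
          exact this ((hEmem a ω).2 ⟨hXa, hra⟩)
        · have hbj : b ≠ j := haj ▸ hab.symm
          have := h' b ((hsetmem b).2 ⟨hb1, hbi⟩)
          rw [if_neg hbj] at this
          exact this ((hEmem b ω).2 ⟨hXb, hrb⟩)
  -- measurability of B1
  have hB1meas : ∀ j, MeasurableSet (B1 j) := by
    intro j
    refine MeasurableSet.biInter s.countable_toSet (fun l _ => ?_)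
    by_cases h : l = j <;> simp [h, hEmeas, (hEmeas l).compl]
  -- disjointness
  have hdisj1 : Disjoint B0 (⋃ j ∈ s, B1 j) := by
    rw [Set.disjoint_left]
    intro ω hω0 hω1
    simp only [Set.mem_iUnion] at hω1
    obtain ⟨j, hj, hωj⟩ := hω1
    have h1 := (hmemB1 j ω).1 hωj j hj
    rw [if_pos rfl] at h1
    rw [hB0] at hω0
    simp only [Set.mem_iInter, Set.mem_compl_iff] at hω0
    exact hω0 j hj h1
  have hdisj2 : (↑s : Set ℕ).PairwiseDisjoint B1 := by
    intro a ha b hb hab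
    rw [Function.onFun, Set.disjoint_left]
    intro ω hωa hωb
    have h1 := (hmemB1 a ω).1 hωa a (by simpa using ha)
    rw [if_pos rfl] at h1
    have h2 := (hmemB1 b ω).1 hωb a (by simpa using ha)
    rw [if_neg hab] at h2
    exact h2 h1
  -- measure computation
  have hPB0 : ℙ B0 = ∏ l ∈ s, (1 - ℙ (E l)) := by
    rw [hB0, hmeas _ (fun l _ => Or.inr rfl)]
    exact Finset.prod_congr rfl (fun l _ => hθc l)
  have hPB1 : ∀ j ∈ s, ℙ (B1 j) = ℙ (E j) * ∏ l ∈ s.erase j, (1 - ℙ (E l)) := by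
    intro j hj
    rw [hB1, hmeas _ (fun l _ => by by_cases h : l = j <;> simp [h])]
    rw [← Finset.mul_prod_erase s _ hj, if_pos rfl]
    congr 1
    refine Finset.prod_congr rfl (fun l hl => ?_)
    rw [if_neg (Finset.ne_of_mem_erase hl), hθc l]
  have hPunion : ℙ (B0 ∪ ⋃ j ∈ s, B1 j) =
      ∏ l ∈ s, (1 - ℙ (E l)) + ∑ j ∈ s, ℙ (E j) * ∏ l ∈ s.erase j, (1 - ℙ (E l)) := by
    rw [measure_union hdisj1 (MeasurableSet.biUnion s.countable_toSet (fun j _ => hB1meas j)),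
      measure_biUnion_finset hdisj2 (fun j _ => hB1meas j), hPB0]
    congr 1
    exact Finset.sum_congr rfl hPB1
  -- convert to real
  have hpG1 : ∀ l, p * G l ≤ 1 := fun l =>
    mul_le_one₀ hp1 (hGnn l) (hG1 l)
  have hpGnn : ∀ l, 0 ≤ p * G l := fun l => mul_nonneg hp0.le (hGnn l)
  have hone : ∀ l ∈ s, (1 - ℙ (E l)).toReal = g (i - l) := by
    intro l hl
    rw [hθ l hl, ENNReal.toReal_sub_of_le (ENNReal.ofReal_le_one.2 (hpG1 _)) ENNReal.one_ne_top,
      ENNReal.toReal_one, ENNReal.toReal_ofReal (hpGnn _), hg]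
  have hfin1 : ∀ l ∈ s, (1 - ℙ (E l)) ≠ ⊤ := fun l _ =>
    (lt_of_le_of_lt (tsub_le_self) ENNReal.one_lt_top).ne
  have htR : (ℙ (B0 ∪ ⋃ j ∈ s, B1 j)).toReal =
      ∏ l ∈ s, g (i - l) + ∑ j ∈ s, (p * G (i - j)) * ∏ l ∈ s.erase j, g (i - l) := by
    rw [hPunion, ENNReal.toReal_add
      (by rw [← lt_top_iff_ne_top]; exact ENNReal.prod_lt_top (fun l hl => lt_top_iff_ne_top.2 (hfin1 l hl)))
      (by rw [← lt_top_iff_ne_top]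
          refine ENNReal.sum_lt_top.2 (fun j hj => ?_)
          exact ENNReal.mul_lt_top (lt_of_le_of_lt prob_le_one ENNReal.one_lt_top)
            (ENNReal.prod_lt_top (fun l hl => lt_top_iff_ne_top.2 (hfin1 l (Finset.erase_subset _ _ hl))))),
      ENNReal.toReal_prod, ENNReal.toReal_sum
        (fun j hj => ENNReal.mul_ne_top (measure_ne_top _ _)
          (by rw [← lt_top_iff_ne_top]; exact ENNReal.prod_lt_top (fun l hl => lt_top_iff_ne_top.2 (hfin1 l (Finset.erase_subset _ _ hl)))))]
    congr 1
    · exact Finset.prod_congr rfl hone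
    · refine Finset.sum_congr rfl (fun j hj => ?_)
      rw [ENNReal.toReal_mul, ENNReal.toReal_prod, hθ j hj,
        ENNReal.toReal_ofReal (hpGnn _)]
      congr 1
      exact Finset.prod_congr rfl (fun l hl => hone l (Finset.erase_subset _ _ hl))
  -- reindex: j ↦ i - j maps Icc 1 i to range i
  have himg : s.image (fun j => i - j) = Finset.range i := by
    ext k
    simp only [Finset.mem_image, hsetmem, Finset.mem_range]
    constructor
    · rintro ⟨j, ⟨hj1, hj2⟩, rfl⟩; omega
    · intro hk; exact ⟨i - k, by omega, by omega⟩
  have hinj : ∀ x ∈ s, ∀ y ∈ s, i - x = i - y → x = y := by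
    intro x hx y hy h
    rw [hsetmem] at hx hy
    omega
  have himg2 : ∀ j ∈ s, (s.erase j).image (fun l => i - l) = (Finset.range i).erase (i - j) := by
    intro j hj
    rw [hsetmem] at hj
    ext k
    simp only [Finset.mem_image, Finset.mem_erase, hsetmem, Finset.mem_range]
    constructor
    · rintro ⟨l, ⟨hlj, hl1, hl2⟩, rfl⟩
      refine ⟨by omega, by omega⟩
    · rintro ⟨hkj, hk⟩
      exact ⟨i - k, ⟨by omega, by omega, by omega⟩, by omega⟩
  have hprod : ∏ l ∈ s, g (i - l) = ∏ k ∈ Finset.range i, g k := by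
    rw [← himg, Finset.prod_image hinj]
  have hsum : ∑ j ∈ s, (p * G (i - j)) * ∏ l ∈ s.erase j, g (i - l) =
      ∑ k ∈ Finset.range i, p * G k * ∏ m ∈ (Finset.range i).erase k, g m := by
    have hstep : ∀ j ∈ s, (p * G (i - j)) * ∏ l ∈ s.erase j, g (i - l) =
        p * G (i - j) * ∏ m ∈ (Finset.range i).erase (i - j), g m := by
      intro j hj
      congr 1
      rw [← himg2 j hj, Finset.prod_image
        (fun x hx y hy => hinj x (Finset.erase_subset _ _ hx) y (Finset.erase_subset _ _ hy))]
    rw [Finset.sum_congr rfl hstep, ← himg, Finset.sum_image hinj]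
  rw [hset, htR, hprod, hsum]
  exact stmt7_alg hp0 hp1 G g hG0 hGnn hG1 hg i hi
end

section
/- Let $(X_i)_{i\ge 1}$ be i.i.d. Bernoulli($p$) random variables and $(\rho_i)_{i\ge 1}$ i.i.d. $\mathbb{N}$-valued random variables independent of the $X_i$'s, with tail $G(j) = \mathbb{P}(\rho \ge j)$. Suppose $\liminf_{j\to\infty} j\,G(j) = l > 1$ and $p > 1/l$. Then almost surely there exists a finite $T$ such that for every $i \ge T$ there are at least two distinct indices $j, k < i$ with $X_j = X_k = 1$, $j + \rho_j \ge i$, and $k + \rho_k \ge i$. -/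
open MeasureTheory ProbabilityTheory Filter
open scoped ENNReal

namespace Stmt8Aux

/-- Harmonic sum lower bound. -/
lemma harmonic_ge_log (M0 i : ℕ) (hM0 : 1 ≤ M0) (hi : 1 ≤ i) :
    Real.log i - Real.log M0 ≤ ∑ m ∈ Finset.Ico M0 i, (1 / (m : ℝ)) := by
  rcases le_or_gt M0 i with h | h
  · have key : ∀ m ∈ Finset.Ico M0 i,
        Real.log ((m : ℝ) + 1) - Real.log m ≤ 1 / (m : ℝ) := by
      intro m hm
      have hm1 : 1 ≤ m := le_trans hM0 (Finset.mem_Ico.1 hm).1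
      have hmpos : (0 : ℝ) < m := by exact_mod_cast hm1
      have hx : (0 : ℝ) < ((m : ℝ) + 1) / m := by positivity
      have := Real.log_le_sub_one_of_pos hx
      rw [Real.log_div (by positivity) (ne_of_gt hmpos)] at this
      have : Real.log ((m : ℝ) + 1) - Real.log m ≤ ((m : ℝ) + 1) / m - 1 := this
      calc Real.log ((m : ℝ) + 1) - Real.log m ≤ ((m : ℝ) + 1) / m - 1 := this
        _ = 1 / m := by field_simp; ring
    have tele : ∑ m ∈ Finset.Ico M0 i, (Real.log ((m : ℝ) + 1) - Real.log m)
        = Real.log i - Real.log M0 := by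
      rw [Finset.sum_Ico_eq_sum_range]
      have tel := Finset.sum_range_sub (f := fun k => Real.log ((M0 + k : ℕ) : ℝ)) (n := i - M0)
      simp only [Nat.add_zero] at tel
      calc ∑ k ∈ Finset.range (i - M0), (Real.log ((↑(M0 + k) : ℝ) + 1) - Real.log (↑(M0 + k) : ℝ))
          = ∑ k ∈ Finset.range (i - M0),
              (Real.log ((M0 + (k+1) : ℕ) : ℝ) - Real.log ((M0 + k : ℕ) : ℝ)) := by
            apply Finset.sum_congr rfl; intro k _; push_cast; ring_nf
        _ = Real.log ((M0 + (i - M0) : ℕ) : ℝ) - Real.log ((M0 : ℕ) : ℝ) := tel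
        _ = Real.log i - Real.log M0 := by rw [Nat.add_sub_cancel' h]
    calc Real.log i - Real.log M0 = ∑ m ∈ Finset.Ico M0 i,
          (Real.log ((m : ℝ) + 1) - Real.log m) := tele.symm
      _ ≤ _ := Finset.sum_le_sum key
  · rw [Finset.Ico_eq_empty (by omega), Finset.sum_empty, sub_nonpos]
    exact Real.log_le_log (by exact_mod_cast hi) (by exact_mod_cast h.le)


lemma prod_one_sub_le_exp (u : Finset ℕ) (f : ℕ → ℝ) (h1 : ∀ m, f m ≤ 1) :
    ∏ m ∈ u, (1 - f m) ≤ Real.exp (-∑ m ∈ u, f m) := by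
  have : Real.exp (-∑ m ∈ u, f m) = ∏ m ∈ u, Real.exp (-f m) := by
    rw [← Real.exp_sum]; congr 1; rw [Finset.sum_neg_distrib]
  rw [this]
  apply Finset.prod_le_prod
  · intro m _; linarith [h1 m]
  · intro m _; linarith [Real.add_one_le_exp (-f m)]

lemma prod_one_sub_anti (u v : Finset ℕ) (f : ℕ → ℝ) (h0 : ∀ m, 0 ≤ f m)
    (h1 : ∀ m, f m ≤ 1) (huv : u ⊆ v) :
    ∏ m ∈ v, (1 - f m) ≤ ∏ m ∈ u, (1 - f m) := by
  rw [← Finset.prod_sdiff huv]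
  have hnn : (0:ℝ) ≤ ∏ m ∈ u, (1 - f m) :=
    Finset.prod_nonneg fun m _ => by linarith [h1 m]
  have hle : ∏ m ∈ v \ u, (1 - f m) ≤ 1 :=
    Finset.prod_le_one (fun m _ => by linarith [h1 m]) (fun m _ => by linarith [h0 m])
  have hnn2 : (0:ℝ) ≤ ∏ m ∈ v \ u, (1 - f m) :=
    Finset.prod_nonneg fun m _ => by linarith [h1 m]
  nlinarith

/-- Main quantitative bound. -/
lemma mainRealBound (qr : ℕ → ℝ) (h0 : ∀ m, 0 ≤ qr m) (h1 : ∀ m, qr m ≤ 1)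
    (cr : ℝ) (hcr : 1 < cr) (M0 : ℕ) (hM0 : 1 ≤ M0)
    (hq : ∀ m, M0 ≤ m → cr / m ≤ qr m) :
    ∃ C : ℝ, 0 < C ∧ ∀ i : ℕ, 1 ≤ i →
      (∏ m ∈ Finset.Ico 1 i, (1 - qr m)) +
        ∑ m ∈ Finset.Ico 1 i, qr m * ∏ m' ∈ (Finset.Ico 1 i).erase m, (1 - qr m')
      ≤ C * (i : ℝ) ^ (-((cr + 1) / 2)) := by
  set a : ℝ := (cr + 1) / 2 with ha
  set δ : ℝ := (cr - 1) / (2 * cr) with hδ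
  have hcr0 : (0:ℝ) < cr := by linarith
  have hδ0 : 0 < δ := div_pos (by linarith) (by linarith)
  have hδ2 : δ < 1 := by rw [hδ]; rw [div_lt_one (by positivity)]; linarith
  have hθa : (1 - δ) * cr = a := by rw [hδ, ha]; field_simp; ring
  set K : ℝ := max (1 + Real.exp 1 * M0) (Real.exp 1 / δ) with hK
  have hK0 : 0 < K := lt_of_lt_of_le (by positivity) (le_max_right _ _)
  refine ⟨K * (M0 : ℝ) ^ a, by positivity, ?_⟩
  intro i hi
  set s : Finset ℕ := Finset.Ico 1 i with hs
  set t : Finset ℕ := Finset.Ico M0 i with ht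
  have hts : t ⊆ s := Finset.Ico_subset_Ico hM0 le_rfl
  set T : ℝ := ∑ m ∈ t, qr m with hT
  have hT0 : 0 ≤ T := Finset.sum_nonneg fun m _ => h0 m
  -- full product bound
  have F3 : ∏ m ∈ s, (1 - qr m) ≤ Real.exp (-T) :=
    le_trans (prod_one_sub_anti t s qr h0 h1 hts) (prod_one_sub_le_exp t qr h1)
  -- per-term bound
  have F4 : ∀ m, ∏ m' ∈ s.erase m, (1 - qr m') ≤ Real.exp (1 - T) := by
    intro m
    have h5 : ∏ m' ∈ s.erase m, (1 - qr m') ≤ ∏ m' ∈ t.erase m, (1 - qr m') :=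
      prod_one_sub_anti _ _ qr h0 h1 (Finset.erase_subset_erase _ hts)
    have h6 : T - 1 ≤ ∑ m' ∈ t.erase m, qr m' := by
      by_cases hm : m ∈ t
      · have := Finset.add_sum_erase t qr hm
        have := h1 m; have := h0 m
        rw [hT]; linarith [Finset.add_sum_erase t qr hm]
      · rw [Finset.erase_eq_of_notMem hm, ← hT]; linarith
    calc ∏ m' ∈ s.erase m, (1 - qr m') ≤ ∏ m' ∈ t.erase m, (1 - qr m') := h5
      _ ≤ Real.exp (-∑ m' ∈ t.erase m, qr m') := prod_one_sub_le_exp _ qr h1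
      _ ≤ Real.exp (1 - T) := Real.exp_le_exp.2 (by linarith)
  -- sum of qr over s
  have F5 : ∑ m ∈ s, qr m ≤ (M0 : ℝ) + T := by
    rcases le_or_gt M0 i with h | h
    · have hsplit : Finset.Ico 1 M0 ∪ Finset.Ico M0 i = Finset.Ico 1 i :=
        Finset.Ico_union_Ico_eq_Ico hM0 h
      have hdisj : Disjoint (Finset.Ico 1 M0) (Finset.Ico M0 i) := by
        apply Finset.Ico_disjoint_Ico_consecutive
      rw [hs, ← hsplit, Finset.sum_union hdisj]
      have : ∑ m ∈ Finset.Ico 1 M0, qr m ≤ (M0 : ℝ) := by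
        calc ∑ m ∈ Finset.Ico 1 M0, qr m ≤ ∑ m ∈ Finset.Ico 1 M0, 1 :=
              Finset.sum_le_sum fun m _ => h1 m
          _ = ((M0 - 1 : ℕ) : ℝ) := by simp [Nat.card_Ico]
          _ ≤ (M0 : ℝ) := by exact_mod_cast Nat.sub_le M0 1
      rw [ht] at hT; rw [hT]; linarith
    · calc ∑ m ∈ s, qr m ≤ ∑ m ∈ s, 1 := Finset.sum_le_sum fun m _ => h1 m
        _ = ((i - 1 : ℕ) : ℝ) := by simp [hs, Nat.card_Ico]
        _ ≤ (M0 : ℝ) := by exact_mod_cast by omega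
        _ ≤ (M0 : ℝ) + T := by linarith
  -- combine
  have F6 : (∏ m ∈ s, (1 - qr m)) +
      ∑ m ∈ s, qr m * ∏ m' ∈ s.erase m, (1 - qr m')
      ≤ (1 + Real.exp 1 * ((M0 : ℝ) + T)) * Real.exp (-T) := by
    have hsum : ∑ m ∈ s, qr m * ∏ m' ∈ s.erase m, (1 - qr m')
        ≤ ∑ m ∈ s, qr m * Real.exp (1 - T) := by
      apply Finset.sum_le_sum
      intro m _
      exact mul_le_mul_of_nonneg_left (F4 m) (h0 m)
    have : ∑ m ∈ s, qr m * Real.exp (1 - T) = (∑ m ∈ s, qr m) * Real.exp (1 - T) := by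
      rw [← Finset.sum_mul]
    rw [this] at hsum
    have hexp : Real.exp (1 - T) = Real.exp 1 * Real.exp (-T) := by
      rw [← Real.exp_add]; ring_nf
    have h7 : (∑ m ∈ s, qr m) * Real.exp (1 - T)
        ≤ ((M0 : ℝ) + T) * (Real.exp 1 * Real.exp (-T)) := by
      rw [hexp]
      exact mul_le_mul_of_nonneg_right F5 (by positivity)
    nlinarith [F3, Real.exp_pos (-T)]
  have F7 : (1 + Real.exp 1 * ((M0 : ℝ) + T)) ≤ K * Real.exp (δ * T) := by
    have e1 : 1 + Real.exp 1 * (M0 : ℝ) ≤ K := le_max_left _ _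
    have e2 : Real.exp 1 * T ≤ K * (δ * T) := by
      have : Real.exp 1 / δ ≤ K := le_max_right _ _
      have h8 : Real.exp 1 ≤ K * δ := by
        rw [div_le_iff₀ hδ0] at this; linarith
      nlinarith
    have e3 : 1 + δ * T ≤ Real.exp (δ * T) := by
      linarith [Real.add_one_le_exp (δ * T)]
    nlinarith [mul_nonneg hδ0.le hT0]
  -- T lower bound
  have F9 : cr * (Real.log i - Real.log M0) ≤ T := by
    have : cr * (Real.log i - Real.log M0) ≤ cr * ∑ m ∈ t, (1 / (m : ℝ)) :=
      mul_le_mul_of_nonneg_left (harmonic_ge_log M0 i hM0 hi) hcr0.le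
    refine le_trans this ?_
    rw [Finset.mul_sum, hT]
    apply Finset.sum_le_sum
    intro m hm
    rw [mul_one_div]
    exact hq m (Finset.mem_Ico.1 hm).1
  -- final chain
  have hθ0 : 0 < 1 - δ := by linarith
  have F11 : Real.exp (δ * T) * Real.exp (-T)
      ≤ (M0 : ℝ) ^ a * (i : ℝ) ^ (-a) := by
    rw [← Real.exp_add]
    have hi0 : (0:ℝ) < i := by exact_mod_cast hi
    have hM00 : (0:ℝ) < M0 := by exact_mod_cast hM0
    have : δ * T + -T = -((1 - δ) * T) := by ring
    rw [this]
    have h12 : (1 - δ) * (cr * (Real.log i - Real.log M0)) ≤ (1 - δ) * T :=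
      mul_le_mul_of_nonneg_left F9 hθ0.le
    have h13 : -((1 - δ) * T) ≤ a * Real.log M0 + (-a) * Real.log i := by
      have : (1 - δ) * (cr * (Real.log i - Real.log M0))
          = a * Real.log i - a * Real.log M0 := by rw [← hθa]; ring
      linarith [h12, this]
    calc Real.exp (-((1 - δ) * T)) ≤ Real.exp (a * Real.log M0 + (-a) * Real.log i) :=
          Real.exp_le_exp.2 h13
      _ = Real.exp (Real.log M0 * a) * Real.exp (Real.log i * (-a)) := by
          rw [← Real.exp_add]; ring_nf
      _ = (M0 : ℝ) ^ a * (i : ℝ) ^ (-a) := by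
          rw [← Real.rpow_def_of_pos hM00, ← Real.rpow_def_of_pos hi0]
  calc (∏ m ∈ s, (1 - qr m)) + ∑ m ∈ s, qr m * ∏ m' ∈ s.erase m, (1 - qr m')
      ≤ (1 + Real.exp 1 * ((M0 : ℝ) + T)) * Real.exp (-T) := F6
    _ ≤ K * Real.exp (δ * T) * Real.exp (-T) :=
        mul_le_mul_of_nonneg_right F7 (Real.exp_pos _).le
    _ ≤ K * ((M0 : ℝ) ^ a * (i : ℝ) ^ (-a)) := by
        rw [mul_assoc]; exact mul_le_mul_of_nonneg_left F11 hK0.le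
    _ = K * (M0 : ℝ) ^ a * (i : ℝ) ^ (-a) := by ring

lemma reflect_prod {M : Type*} [CommMonoid M] (f : ℕ → M) (i : ℕ) :
    ∏ j ∈ Finset.Ico 1 i, f (i - j) = ∏ m ∈ Finset.Ico 1 i, f m := by
  apply Finset.prod_nbij' (fun j => i - j) (fun m => i - m)
  · intro a ha; simp only [Finset.mem_Ico] at *; omega
  · intro a ha; simp only [Finset.mem_Ico] at *; omega
  · intro a ha; simp only [Finset.mem_Ico] at *; omega
  · intro a ha; simp only [Finset.mem_Ico] at *; omega
  · intro a ha; rfl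

lemma reflect_prod_erase {M : Type*} [CommMonoid M] (f : ℕ → M) (i j0 : ℕ)
    (h : j0 ∈ Finset.Ico 1 i) :
    ∏ j ∈ (Finset.Ico 1 i).erase j0, f (i - j)
      = ∏ m ∈ (Finset.Ico 1 i).erase (i - j0), f m := by
  simp only [Finset.mem_Ico] at h
  apply Finset.prod_nbij' (fun j => i - j) (fun m => i - m)
  · intro a ha; simp only [Finset.mem_erase, Finset.mem_Ico] at *; omega
  · intro a ha; simp only [Finset.mem_erase, Finset.mem_Ico] at *; omega
  · intro a ha; simp only [Finset.mem_erase, Finset.mem_Ico] at *; omega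
  · intro a ha; simp only [Finset.mem_erase, Finset.mem_Ico] at *; omega
  · intro a ha; rfl

lemma reflect_sum (f : ℕ → ℝ≥0∞) (i : ℕ) :
    ∑ j ∈ Finset.Ico 1 i, f (i - j) = ∑ m ∈ Finset.Ico 1 i, f m := by
  apply Finset.sum_nbij' (fun j => i - j) (fun m => i - m)
  · intro a ha; simp only [Finset.mem_Ico] at *; omega
  · intro a ha; simp only [Finset.mem_Ico] at *; omega
  · intro a ha; simp only [Finset.mem_Ico] at *; omega
  · intro a ha; simp only [Finset.mem_Ico] at *; omega
  · intro a ha; rfl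

lemma ofReal_prod_of_nonneg {s : Finset ℕ} {f : ℕ → ℝ} (h : ∀ m ∈ s, 0 ≤ f m) :
    ENNReal.ofReal (∏ m ∈ s, f m) = ∏ m ∈ s, ENNReal.ofReal (f m) := by
  classical
  induction s using Finset.induction with
  | empty => simp
  | @insert a s' hm ih =>
    rw [Finset.prod_insert hm, Finset.prod_insert hm,
      ENNReal.ofReal_mul (h a (Finset.mem_insert_self a s')),
      ih (fun m hms => h m (Finset.mem_insert_of_mem hms))]


end Stmt8Aux

open Stmt8Aux

set_option maxHeartbeats 2000000 in
/-- percolation half of Proposition 2.1: If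
`liminf_j j·P(ρ ≥ j) = l > 1` and `p > 1/l`, then almost surely there is a finite
`T` such that every `i ≥ T` is covered by at least two distinct open sources. -/
theorem stmt8 {Ω : Type*} [MeasureSpace Ω] [IsProbabilityMeasure (ℙ : Measure Ω)]
    (p : ℝ) (hp : p ∈ Set.Ioc (0 : ℝ) 1) (X : ℕ → Ω → Bool) (ρ : ℕ → Ω → ℕ)
    (hXm : ∀ i, Measurable (X i)) (hρm : ∀ i, Measurable (ρ i))
    (hindep : iIndepFun (fun i ω => (X i ω, ρ i ω)) ℙ)
    (hpair : ∀ i, IndepFun (X i) (ρ i) ℙ)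
    (hX : ∀ i, ℙ {ω | X i ω = true} = ENNReal.ofReal p)
    (hρ : ∀ i, IdentDistrib (ρ i) (ρ 1) ℙ ℙ)
    (l : ℝ≥0∞)
    (hliminf : Filter.atTop.liminf
      (fun j : ℕ => (j : ℝ≥0∞) * ℙ {ω | j ≤ ρ 1 ω}) = l)
    (hl : 1 < l) (hpl : 1 / l < ENNReal.ofReal p) :
    ∀ᵐ ω ∂ℙ, ∃ T : ℕ, ∀ i, T ≤ i →
      ∃ j k : ℕ, j ≠ k ∧ 1 ≤ j ∧ j < i ∧ 1 ≤ k ∧ k < i ∧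
        X j ω = true ∧ X k ω = true ∧ i ≤ j + ρ j ω ∧ i ≤ k + ρ k ω := by
  classical
  obtain ⟨hp0, hp1⟩ := hp
  set P : ℝ≥0∞ := ENNReal.ofReal p with hP
  have hP0 : P ≠ 0 := by simp [hP, ENNReal.ofReal_eq_zero]; linarith
  have hPtop : P ≠ ∞ := ENNReal.ofReal_ne_top
  have hP1 : P ≤ 1 := ENNReal.ofReal_le_one.2 hp1
  set G : ℕ → ℝ≥0∞ := fun m => ℙ {ω | m ≤ ρ 1 ω} with hG
  set q : ℕ → ℝ≥0∞ := fun m => P * G m with hq'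
  have hG1 : ∀ m, G m ≤ 1 := fun m => prob_le_one
  have hq1 : ∀ m, q m ≤ 1 := fun m =>
    le_trans (mul_le_mul' hP1 (hG1 m)) (by simp)
  have hqtop : ∀ m, q m ≠ ∞ := fun m => (lt_of_le_of_lt (hq1 m) (by simp)).ne
  set qr : ℕ → ℝ := fun m => (q m).toReal with hqr
  have hqr0 : ∀ m, 0 ≤ qr m := fun m => ENNReal.toReal_nonneg
  have hqr1 : ∀ m, qr m ≤ 1 := fun m => by
    rw [hqr]; exact_mod_cast ENNReal.toReal_mono (by simp) (hq1 m)
  have hqofReal : ∀ m, ENNReal.ofReal (qr m) = q m := fun m =>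
    ENNReal.ofReal_toReal (hqtop m)
  have h1subq : ∀ m, 1 - q m = ENNReal.ofReal (1 - qr m) := by
    intro m
    rw [ENNReal.ofReal_sub _ (hqr0 m), hqofReal, ENNReal.ofReal_one]
  -- the events
  set Pr : ℕ → Ω → Bool × ℕ := fun j ω => (X j ω, ρ j ω) with hPr
  set SB : ℕ → Set (Bool × ℕ) := fun m => {x | x.1 = true ∧ m ≤ x.2} with hSB
  set B : ℕ → ℕ → Set Ω := fun i j => Pr j ⁻¹' SB (i - j) with hB
  have hSBm : ∀ m, MeasurableSet (SB m) := fun m => MeasurableSet.of_discrete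
  have hPrmeas : ∀ j, Measurable (Pr j) := fun j => (hXm j).prodMk (hρm j)
  -- single event probability
  have hBprob : ∀ (m j : ℕ), ℙ (Pr j ⁻¹' SB m) = q m := by
    intro m j
    have hsplit : Pr j ⁻¹' SB m = X j ⁻¹' {true} ∩ ρ j ⁻¹' Set.Ici m := by
      ext ω; simp [hPr, hSB, Set.mem_Ici]
    rw [hsplit, (hpair j).measure_inter_preimage_eq_mul _ _
      MeasurableSet.of_discrete MeasurableSet.of_discrete]
    have h1 : ℙ (X j ⁻¹' {true}) = P := by
      rw [← hX j]; congr 1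
    have h2 : ℙ (ρ j ⁻¹' Set.Ici m) = G m := by
      rw [(hρ j).measure_mem_eq MeasurableSet.of_discrete, hG]; congr 1
    rw [h1, h2]
  -- probability of "no source in t"
  have hNoProb : ∀ (i : ℕ) (t : Finset ℕ),
      ℙ (⋂ k ∈ t, (B i k)ᶜ) = ∏ k ∈ t, (1 - q (i - k)) := by
    intro i t
    have hre : (⋂ k ∈ t, (B i k)ᶜ) = ⋂ k ∈ t, Pr k ⁻¹' (SB (i - k))ᶜ := by
      apply Set.iInter₂_congr; intro k _; rw [hB, Set.preimage_compl]
    rw [hre, hindep.measure_inter_preimage_eq_mul t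
      (fun k _ => (hSBm (i - k)).compl)]
    apply Finset.prod_congr rfl
    intro k _
    rw [Set.preimage_compl, prob_compl_eq_one_sub ((hPrmeas k) (hSBm (i - k))),
      hBprob]
  -- probability of "source at j and no other source"
  have hOneProb : ∀ (i j : ℕ), j ∈ Finset.Ico 1 i →
      ℙ (B i j ∩ ⋂ k ∈ (Finset.Ico 1 i).erase j, (B i k)ᶜ)
        = q (i - j) * ∏ k ∈ (Finset.Ico 1 i).erase j, (1 - q (i - k)) := by
    intro i j hj
    set sets : ℕ → Set (Bool × ℕ) :=
      fun k => if k = j then SB (i - k) else (SB (i - k))ᶜ with hsets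
    have hre : B i j ∩ ⋂ k ∈ (Finset.Ico 1 i).erase j, (B i k)ᶜ
        = ⋂ k ∈ Finset.Ico 1 i, Pr k ⁻¹' sets k := by
      conv_rhs => rw [← Finset.insert_erase hj]
      rw [Finset.set_biInter_insert]
      congr 1
      · rw [hsets]; simp only [if_pos rfl]; rfl
      · apply Set.iInter₂_congr; intro k hk
        rw [hsets]; simp only [if_neg (Finset.ne_of_mem_erase hk)]
        rw [hB, Set.preimage_compl]
    rw [hre, hindep.measure_inter_preimage_eq_mul (Finset.Ico 1 i)
      (fun k _ => by rw [hsets]; dsimp only; split <;> [exact hSBm _; exact (hSBm _).compl]),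
      ← Finset.mul_prod_erase _ _ hj]
    congr 1
    · rw [hsets]; simp only [if_pos rfl]; exact hBprob _ _
    · apply Finset.prod_congr rfl
      intro k hk
      rw [hsets]; simp only [if_neg (Finset.ne_of_mem_erase hk)]
      rw [Set.preimage_compl, prob_compl_eq_one_sub ((hPrmeas k) (hSBm (i - k))),
        hBprob]
  -- the good-event predicate
  set Pg : ℕ → Ω → Prop := fun i ω =>
    ∃ j k : ℕ, j ≠ k ∧ 1 ≤ j ∧ j < i ∧ 1 ≤ k ∧ k < i ∧
      X j ω = true ∧ X k ω = true ∧ i ≤ j + ρ j ω ∧ i ≤ k + ρ k ω with hPg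
  have hmemB : ∀ i j ω, ω ∈ B i j ↔ (X j ω = true ∧ i - j ≤ ρ j ω) := fun i j ω => Iff.rfl
  -- inclusion into "no source" ∪ "exactly one source"
  have hincl : ∀ i, {ω | ¬ Pg i ω} ⊆
      (⋂ k ∈ Finset.Ico 1 i, (B i k)ᶜ) ∪
        ⋃ j ∈ Finset.Ico 1 i, (B i j ∩ ⋂ k ∈ (Finset.Ico 1 i).erase j, (B i k)ᶜ) := by
    intro i ω hω
    simp only [Set.mem_setOf_eq] at hω
    by_cases hN : ω ∈ ⋂ k ∈ Finset.Ico 1 i, (B i k)ᶜ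
    · exact Or.inl hN
    · right
      simp only [Set.mem_iInter, Set.mem_compl_iff, not_forall, not_not] at hN
      obtain ⟨j, hjmem, hjB⟩ := hN
      refine Set.mem_biUnion hjmem ⟨hjB, ?_⟩
      simp only [Set.mem_iInter, Set.mem_compl_iff]
      intro k hk hkB
      obtain ⟨hkj, hkmem⟩ := Finset.mem_erase.1 hk
      rw [hmemB] at hjB hkB
      rw [Finset.mem_Ico] at hjmem hkmem
      exact hω ⟨j, k, fun h => hkj h.symm, hjmem.1, hjmem.2, hkmem.1, hkmem.2,
        hjB.1, hkB.1, by omega, by omega⟩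
  -- quantitative bound on the bad event
  have hBadBound : ∀ i : ℕ, 1 ≤ i → ℙ {ω | ¬ Pg i ω} ≤
      ENNReal.ofReal ((∏ m ∈ Finset.Ico 1 i, (1 - qr m)) +
        ∑ m ∈ Finset.Ico 1 i, qr m * ∏ m' ∈ (Finset.Ico 1 i).erase m, (1 - qr m')) := by
    intro i hi
    have hprod_eq : ∀ t : Finset ℕ,
        ∏ m ∈ t, (1 - q m) = ENNReal.ofReal (∏ m ∈ t, (1 - qr m)) := by
      intro t
      rw [ofReal_prod_of_nonneg (fun m _ => by linarith [hqr1 m])]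
      exact Finset.prod_congr rfl fun m _ => h1subq m
    have h1 : ℙ (⋂ k ∈ Finset.Ico 1 i, (B i k)ᶜ)
        = ENNReal.ofReal (∏ m ∈ Finset.Ico 1 i, (1 - qr m)) := by
      rw [hNoProb, reflect_prod (fun m => 1 - q m) i, hprod_eq]
    have h2 : ℙ (⋃ j ∈ Finset.Ico 1 i,
          (B i j ∩ ⋂ k ∈ (Finset.Ico 1 i).erase j, (B i k)ᶜ))
        ≤ ENNReal.ofReal (∑ m ∈ Finset.Ico 1 i,
            qr m * ∏ m' ∈ (Finset.Ico 1 i).erase m, (1 - qr m')) := by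
      calc ℙ (⋃ j ∈ Finset.Ico 1 i,
            (B i j ∩ ⋂ k ∈ (Finset.Ico 1 i).erase j, (B i k)ᶜ))
          ≤ ∑ j ∈ Finset.Ico 1 i,
              ℙ (B i j ∩ ⋂ k ∈ (Finset.Ico 1 i).erase j, (B i k)ᶜ) :=
            measure_biUnion_finset_le _ _
        _ = ∑ j ∈ Finset.Ico 1 i,
              (fun m => q m * ∏ m' ∈ (Finset.Ico 1 i).erase m, (1 - q m')) (i - j) := by
            apply Finset.sum_congr rfl
            intro j hj
            rw [hOneProb i j hj, reflect_prod_erase (fun m => 1 - q m) i j hj]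
        _ = ∑ m ∈ Finset.Ico 1 i,
              q m * ∏ m' ∈ (Finset.Ico 1 i).erase m, (1 - q m') :=
            reflect_sum (fun m => q m * ∏ m' ∈ (Finset.Ico 1 i).erase m, (1 - q m')) i
        _ = ∑ m ∈ Finset.Ico 1 i, ENNReal.ofReal
              (qr m * ∏ m' ∈ (Finset.Ico 1 i).erase m, (1 - qr m')) := by
            apply Finset.sum_congr rfl
            intro m _
            rw [ENNReal.ofReal_mul (hqr0 m), hqofReal, hprod_eq]
        _ = ENNReal.ofReal (∑ m ∈ Finset.Ico 1 i,
              qr m * ∏ m' ∈ (Finset.Ico 1 i).erase m, (1 - qr m')) := by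
            rw [ENNReal.ofReal_sum_of_nonneg]
            intro m _
            exact mul_nonneg (hqr0 m)
              (Finset.prod_nonneg fun m' _ => by linarith [hqr1 m'])
    calc ℙ {ω | ¬ Pg i ω}
        ≤ ℙ ((⋂ k ∈ Finset.Ico 1 i, (B i k)ᶜ) ∪
            ⋃ j ∈ Finset.Ico 1 i,
              (B i j ∩ ⋂ k ∈ (Finset.Ico 1 i).erase j, (B i k)ᶜ)) :=
          measure_mono (hincl i)
      _ ≤ ℙ (⋂ k ∈ Finset.Ico 1 i, (B i k)ᶜ) +
            ℙ (⋃ j ∈ Finset.Ico 1 i,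
              (B i j ∩ ⋂ k ∈ (Finset.Ico 1 i).erase j, (B i k)ᶜ)) :=
          measure_union_le _ _
      _ ≤ ENNReal.ofReal (∏ m ∈ Finset.Ico 1 i, (1 - qr m)) +
            ENNReal.ofReal (∑ m ∈ Finset.Ico 1 i,
              qr m * ∏ m' ∈ (Finset.Ico 1 i).erase m, (1 - qr m')) := by
          rw [h1]; exact add_le_add le_rfl h2
      _ = _ := by
          rw [← ENNReal.ofReal_add
            (Finset.prod_nonneg fun m _ => by linarith [hqr1 m])
            (Finset.sum_nonneg fun m _ => mul_nonneg (hqr0 m)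
              (Finset.prod_nonneg fun m' _ => by linarith [hqr1 m']))]
  -- choice of the constants cr and M0
  have hl0 : l ≠ 0 := by intro h; rw [h] at hl; exact absurd hl (by simp)
  have hPinvl : 1 / P < l := by
    rcases eq_or_ne l ∞ with rfl | hltop
    · exact lt_top_iff_ne_top.2 (by simp [ENNReal.div_eq_top, hP0])
    · rw [ENNReal.div_lt_iff (Or.inl hP0) (Or.inl hPtop)]
      have h4 : (1 / l) * l < P * l := by
        exact ENNReal.mul_lt_mul_left hl0 hltop hpl
      rwa [ENNReal.div_mul_cancel hl0 hltop, mul_comm] at h4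
  obtain ⟨r, hr1, hr2⟩ := exists_between hPinvl
  have hrtop : r ≠ ∞ := hr2.ne_top
  have hev : ∀ᶠ (m : ℕ) in atTop, r < (m : ℝ≥0∞) * G m := by
    apply eventually_lt_of_lt_liminf
    · rw [hG, hliminf]; exact hr2
    · isBoundedDefault
  obtain ⟨M, hM⟩ := eventually_atTop.1 hev
  set c : ℝ≥0∞ := P * r with hc
  have hctop : c ≠ ∞ := ENNReal.mul_ne_top hPtop hrtop
  have hc1 : 1 < c := by
    have h5 : P * (1 / P) < P * r :=
      ENNReal.mul_lt_mul_right hP0 hPtop hr1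
    rwa [one_div, ENNReal.mul_inv_cancel hP0 hPtop] at h5
  set cr : ℝ := c.toReal with hcr
  have hcr1 : 1 < cr := by
    have := (ENNReal.toReal_lt_toReal (by simp) hctop).2 hc1
    simpa using this
  set M0 : ℕ := max M 1 with hM0
  have hqlow : ∀ m, M0 ≤ m → cr / m ≤ qr m := by
    intro m hm
    have hm1 : 1 ≤ m := le_trans (le_max_right M 1) hm
    have hmne : (m : ℝ≥0∞) ≠ 0 := by
      simp only [ne_eq, Nat.cast_eq_zero]; omega
    have h3 : c / (m : ℝ≥0∞) ≤ q m := by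
      rw [hc, hq', mul_div_assoc]
      apply mul_le_mul_right
      rw [ENNReal.div_le_iff_le_mul (Or.inl hmne) (Or.inl (ENNReal.natCast_ne_top m))]
      rw [mul_comm]
      exact (hM m (le_trans (le_max_left M 1) hm)).le
    have h6 := ENNReal.toReal_mono (hqtop m) h3
    rwa [ENNReal.toReal_div, ENNReal.toReal_natCast] at h6
  obtain ⟨C, hC0, hCb⟩ := mainRealBound qr hqr0 hqr1 cr hcr1 M0 (le_max_right M 1) hqlow
  set a : ℝ := (cr + 1) / 2 with ha
  have ha1 : 1 < a := by rw [ha]; linarith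
  -- summability
  have hsumf : Summable (fun n : ℕ => C * (n : ℝ) ^ (-a)) :=
    (Real.summable_nat_rpow.2 (by linarith)).mul_left C
  have hsum2 : Summable (fun n : ℕ => C * ((n + 2 : ℕ) : ℝ) ^ (-a)) :=
    (summable_nat_add_iff 2).2 hsumf
  have htsum : (∑' n : ℕ, ℙ {ω | ¬ Pg (n + 2) ω}) ≠ ∞ := by
    have hle : ∀ n : ℕ, ℙ {ω | ¬ Pg (n + 2) ω}
        ≤ ENNReal.ofReal (C * ((n + 2 : ℕ) : ℝ) ^ (-a)) := by
      intro n
      exact le_trans (hBadBound (n + 2) (by omega))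
        (ENNReal.ofReal_le_ofReal (hCb (n + 2) (by omega)))
    have hnn : ∀ n : ℕ, 0 ≤ C * ((n + 2 : ℕ) : ℝ) ^ (-a) := fun n =>
      mul_nonneg hC0.le (Real.rpow_nonneg (Nat.cast_nonneg _) _)
    have hfin : (∑' n : ℕ, ℙ {ω | ¬ Pg (n + 2) ω})
        < ∞ :=
      calc (∑' n : ℕ, ℙ {ω | ¬ Pg (n + 2) ω})
          ≤ ∑' n : ℕ, ENNReal.ofReal (C * ((n + 2 : ℕ) : ℝ) ^ (-a)) :=
            ENNReal.tsum_le_tsum hle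
        _ = ENNReal.ofReal (∑' n : ℕ, C * ((n + 2 : ℕ) : ℝ) ^ (-a)) :=
            (ENNReal.ofReal_tsum_of_nonneg hnn hsum2).symm
        _ < ∞ := ENNReal.ofReal_lt_top
    exact hfin.ne
  -- Borel–Cantelli
  have hfreq := measure_setOf_frequently_eq_zero (μ := ℙ)
    (p := fun n ω => ¬ Pg (n + 2) ω) htsum
  have hae : ∀ᵐ ω ∂ℙ, ∀ᶠ n in atTop, Pg (n + 2) ω := by
    rw [ae_iff]
    rw [show {ω : Ω | ¬ ∀ᶠ n in atTop, Pg (n + 2) ω}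
        = {ω : Ω | ∃ᶠ n in atTop, ¬ Pg (n + 2) ω} from by
      ext ω; simp only [Set.mem_setOf_eq, Filter.not_eventually]]
    exact hfreq
  filter_upwards [hae] with ω hω
  obtain ⟨T0, hT0⟩ := eventually_atTop.1 hω
  refine ⟨T0 + 2, fun i hi => ?_⟩
  have h7 := hT0 (i - 2) (by omega)
  rw [Nat.sub_add_cancel (by omega)] at h7
  exact h7
end

section
/- Consider the 2-dimensional model: i.i.d. Bernoulli($p$) variables $(X_{(i,j)})_{(i,j)\in\mathbb{N}^2}$ and i.i.d. $\mathbb{N}$-valued radii $(\rho_{(i,j)})$, independent. For $i \ge j$, the probability that the point $(i,j)$ is not covered by any box $(k,l) + [0,\rho_{(k,l)}]^2$ with $X_{(k,l)} = 1$ equals $\prod_{l=0}^{j-1} g_p(l)^{2l+1} \prod_{k=1}^{i-j} g_p(k+j-1)^{j}$, where $g_p(l) = 1 - p\,\mathbb{P}(\rho \ge l)$. -/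
open MeasureTheory ProbabilityTheory Filter
open scoped ENNReal

lemma stmt13_sq_prod (g : ℕ → ℝ) (n : ℕ) :
    ∏ a ∈ Finset.range n, ∏ b ∈ Finset.range n, g (max a b)
      = ∏ t ∈ Finset.range n, g t ^ (2 * t + 1) := by
  induction n with
  | zero => simp
  | succ n ih =>
    rw [Finset.prod_range_succ]
    have h1 : ∀ a ∈ Finset.range n, ∏ b ∈ Finset.range (n+1), g (max a b)
        = (∏ b ∈ Finset.range n, g (max a b)) * g n := by
      intro a ha
      rw [Finset.prod_range_succ, max_eq_right (le_of_lt (Finset.mem_range.mp ha))]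
    rw [Finset.prod_congr rfl h1, Finset.prod_mul_distrib, ih]
    have h2 : ∏ b ∈ Finset.range (n+1), g (max n b) = g n ^ (n+1) := by
      rw [Finset.prod_congr rfl (fun b hb =>
        by rw [max_eq_left (Nat.lt_succ_iff.mp (Finset.mem_range.mp hb))]),
        Finset.prod_const, Finset.card_range]
    rw [h2, Finset.prod_const, Finset.card_range, Finset.prod_range_succ]
    ring

lemma stmt13_rect_prod (g : ℕ → ℝ) (j i : ℕ) (hij : j ≤ i) :
    ∏ a ∈ Finset.range i, ∏ b ∈ Finset.range j, g (max a b)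
      = (∏ t ∈ Finset.range j, g t ^ (2 * t + 1)) * ∏ t ∈ Finset.Ico j i, g t ^ j := by
  induction i, hij using Nat.le_induction with
  | base => simp [stmt13_sq_prod]
  | succ i hji ih =>
    rw [Finset.prod_range_succ, ih, Finset.prod_Ico_succ_top hji]
    have : ∏ b ∈ Finset.range j, g (max i b) = g i ^ j := by
      rw [Finset.prod_congr rfl (fun b hb => by
        rw [max_eq_left (le_of_lt (lt_of_lt_of_le (Finset.mem_range.mp hb) hji))]),
        Finset.prod_const, Finset.card_range]
    rw [this]; ring

lemma stmt13_reind (g : ℕ → ℝ) (j i : ℕ) (hj : 1 ≤ j) (hij : j ≤ i) :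
    ∏ k ∈ Finset.Icc 1 (i - j), g (k + j - 1) ^ j = ∏ t ∈ Finset.Ico j i, g t ^ j := by
  apply Finset.prod_nbij' (fun k => k + j - 1) (fun t => t - j + 1)
  · intro k hk; simp only [Finset.mem_Icc] at hk; simp only [Finset.mem_Ico]; omega
  · intro t ht; simp only [Finset.mem_Ico] at ht; simp only [Finset.mem_Icc]; omega
  · intro k hk; simp only [Finset.mem_Icc] at hk; omega
  · intro t ht; simp only [Finset.mem_Ico] at ht; omega
  · intro k hk; rfl

lemma stmt13_flip_prod (h : ℕ → ℝ) (n : ℕ) :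
    ∏ k ∈ Finset.Icc 1 n, h (n - k) = ∏ a ∈ Finset.range n, h a := by
  apply Finset.prod_nbij' (fun k => n - k) (fun a => n - a)
  · intro k hk; simp only [Finset.mem_Icc] at hk; simp only [Finset.mem_range]; omega
  · intro a ha; simp only [Finset.mem_range] at ha; simp only [Finset.mem_Icc]; omega
  · intro k hk; simp only [Finset.mem_Icc] at hk; omega
  · intro a ha; simp only [Finset.mem_range] at ha; omega
  · intro k hk; rfl

/-- In the 2-dimensional Bernoulli coverage model, for `i ≥ j ≥ 1`,
the probability that the point `(i,j)` is not covered by any open box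
`(k,l) + [0, ρ_{(k,l)}]²` equals
`∏_{t=0}^{j-1} g_p(t)^{2t+1} · ∏_{k=1}^{i-j} g_p(k+j-1)^j`. -/
theorem stmt13 {Ω : Type*} [MeasureSpace Ω] [IsProbabilityMeasure (ℙ : Measure Ω)]
    (p : ℝ) (hp : p ∈ Set.Ioo (0 : ℝ) 1)
    (X : ℕ × ℕ → Ω → Bool) (ρ : ℕ × ℕ → Ω → ℕ)
    (hXm : ∀ s, Measurable (X s)) (hρm : ∀ s, Measurable (ρ s))
    (hindep : iIndepFun (fun s ω => (X s ω, ρ s ω)) ℙ)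
    (hpair : ∀ s, IndepFun (X s) (ρ s) ℙ)
    (hX : ∀ s, ℙ {ω | X s ω = true} = ENNReal.ofReal p)
    (hρ : ∀ s, IdentDistrib (ρ s) (ρ (1, 1)) ℙ ℙ)
    (G g : ℕ → ℝ) (hG : ∀ n, G n = (ℙ {ω | n ≤ ρ (1, 1) ω}).toReal)
    (hg : ∀ n, g n = 1 - p * G n)
    (i j : ℕ) (hj : 1 ≤ j) (hij : j ≤ i) :
    (ℙ {ω | ¬ ∃ k l : ℕ, 1 ≤ k ∧ 1 ≤ l ∧ k ≤ i ∧ l ≤ j ∧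
        X (k, l) ω = true ∧ max (i - k) (j - l) ≤ ρ (k, l) ω}).toReal =
      (∏ t ∈ Finset.range j, g t ^ (2 * t + 1)) *
        ∏ k ∈ Finset.Icc 1 (i - j), g (k + j - 1) ^ j := by
  set S : Finset (ℕ × ℕ) := Finset.Icc 1 i ×ˢ Finset.Icc 1 j with hS
  set m : ℕ × ℕ → ℕ := fun s => max (i - s.1) (j - s.2) with hm
  set B : ℕ × ℕ → Set (Bool × ℕ) := fun s => {q | ¬ (q.1 = true ∧ m s ≤ q.2)} with hB
  set f : ℕ × ℕ → Ω → Bool × ℕ := fun s ω => (X s ω, ρ s ω) with hf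
  have hset : {ω | ¬ ∃ k l : ℕ, 1 ≤ k ∧ 1 ≤ l ∧ k ≤ i ∧ l ≤ j ∧
      X (k, l) ω = true ∧ max (i - k) (j - l) ≤ ρ (k, l) ω}
      = ⋂ s ∈ S, f s ⁻¹' B s := by
    ext ω
    simp only [Set.mem_setOf_eq, Set.mem_iInter, Set.mem_preimage, hS, hB, hf, hm,
      Finset.mem_product, Finset.mem_Icc, Prod.forall, Set.mem_setOf_eq]
    constructor
    · rintro h k l ⟨⟨hk1, hki⟩, hl1, hlj⟩ ⟨hx, hr⟩
      exact h ⟨k, l, hk1, hl1, hki, hlj, hx, hr⟩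
    · rintro h ⟨k, l, hk1, hl1, hki, hlj, hx, hr⟩
      exact h k l ⟨⟨hk1, hki⟩, hl1, hlj⟩ ⟨hx, hr⟩
  have hBmeas : ∀ s, MeasurableSet (B s) := fun s => (Set.to_countable _).measurableSet
  have hprod : ℙ (⋂ s ∈ S, f s ⁻¹' B s) = ∏ s ∈ S, ℙ (f s ⁻¹' B s) :=
    hindep.measure_inter_preimage_eq_mul S (fun s _ => hBmeas s)
  have hfac : ∀ s, (ℙ (f s ⁻¹' B s)).toReal = g (m s) := by
    intro s
    have hc : f s ⁻¹' B s = ({ω | X s ω = true ∧ m s ≤ ρ s ω})ᶜ := by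
      ext ω; simp [hB, hf]
    have hA : {ω | X s ω = true ∧ m s ≤ ρ s ω}
        = X s ⁻¹' {true} ∩ ρ s ⁻¹' {n | m s ≤ n} := by
      ext ω; simp
    have hAmeas : MeasurableSet {ω | X s ω = true ∧ m s ≤ ρ s ω} := by
      rw [hA]
      exact ((hXm s) (Set.to_countable _).measurableSet).inter
        ((hρm s) (Set.to_countable _).measurableSet)
    have hAval : ℙ {ω | X s ω = true ∧ m s ≤ ρ s ω}
        = ENNReal.ofReal p * ℙ {ω | m s ≤ ρ (1,1) ω} := by
      rw [hA, (hpair s).measure_inter_preimage_eq_mul _ _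
        (Set.to_countable _).measurableSet (Set.to_countable _).measurableSet]
      have := (hρ s).measure_mem_eq (s := {n | m s ≤ n}) (Set.to_countable _).measurableSet
      rw [← hX s]
      congr 1
    have hle1 : ENNReal.ofReal p * ℙ {ω | m s ≤ ρ (1,1) ω} ≤ 1 := by
      calc ENNReal.ofReal p * ℙ {ω | m s ≤ ρ (1,1) ω} ≤ 1 * 1 := by
            apply mul_le_mul' _ prob_le_one
            rw [← ENNReal.ofReal_one]
            exact ENNReal.ofReal_le_ofReal hp.2.le
        _ = 1 := one_mul 1
    rw [hc, prob_compl_eq_one_sub hAmeas, hAval,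
      ENNReal.toReal_sub_of_le hle1 ENNReal.one_ne_top, ENNReal.toReal_mul,
      ENNReal.toReal_ofReal hp.1.le, ENNReal.toReal_one, hg, hG]
  have key : (ℙ {ω | ¬ ∃ k l : ℕ, 1 ≤ k ∧ 1 ≤ l ∧ k ≤ i ∧ l ≤ j ∧
      X (k, l) ω = true ∧ max (i - k) (j - l) ≤ ρ (k, l) ω}).toReal
      = ∏ s ∈ S, g (m s) := by
    rw [hset, hprod, ENNReal.toReal_prod]
    exact Finset.prod_congr rfl fun s _ => hfac s
  rw [key, hS, Finset.prod_product]
  have step1 : ∀ k, ∏ l ∈ Finset.Icc 1 j, g (m (k, l))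
      = ∏ b ∈ Finset.range j, g (max (i - k) b) := by
    intro k
    exact stmt13_flip_prod (fun b => g (max (i - k) b)) j
  rw [Finset.prod_congr rfl (fun k _ => step1 k)]
  have step2 : ∏ k ∈ Finset.Icc 1 i, ∏ b ∈ Finset.range j, g (max (i - k) b)
      = ∏ a ∈ Finset.range i, ∏ b ∈ Finset.range j, g (max a b) :=
    stmt13_flip_prod (fun a => ∏ b ∈ Finset.range j, g (max a b)) i
  rw [step2, stmt13_rect_prod g j i hij, stmt13_reind g j i hj hij]
end

section
/- Let $\rho$ be an $\mathbb{N}$-valued random variable with $\liminf_{j\to\infty} j\,\mathbb{P}(\rho \ge j) > 0$ and $p \in (0,1)$. Consider i.i.d. Bernoulli($p$) variables $(X_{\mathbf{i}})_{\mathbf{i}\in\mathbb{N}^2}$ and i.i.d. copies $(\rho_{\mathbf{i}})$ of $\rho$, independent of the $X$'s. Then almost surely there exists $\mathbf{t} \in \mathbb{N}^2$ such that every point of $\mathbf{t} + \mathbb{N}^2$ lies in at least two distinct boxes $\mathbf{i} + [0,\rho_{\mathbf{i}}]^2$ with $X_{\mathbf{i}} = 1$. -/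
open MeasureTheory ProbabilityTheory Filter
open scoped ENNReal

lemma log_succ_le (n : ℕ) (hn : 1 ≤ n) :
    Real.log (n+1) - Real.log n ≤ 1 / n := by
  have hpos : (0:ℝ) < n := by exact_mod_cast hn
  have h := Real.log_le_sub_one_of_pos (x := ((n:ℝ)+1)/n) (by positivity)
  rw [Real.log_div (by positivity) (by positivity)] at h
  have h2 : ((n:ℝ)+1)/n - 1 = 1/n := by field_simp; ring
  linarith [h2 ▸ h]

lemma harm_lb (K : ℕ) (hK : 1 ≤ K) : ∀ M, K ≤ M →
    Real.log (M+1) - Real.log K ≤ ∑ a ∈ Finset.Icc K M, (1 / a : ℝ) := by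
  intro M
  induction M with
  | zero => omega
  | succ n ih =>
    intro h
    rcases eq_or_lt_of_le h with h1 | h1
    · rw [← h1, Finset.Icc_self, Finset.sum_singleton]
      have := log_succ_le K hK
      push_cast at this ⊢
      linarith
    · have hKn : K ≤ n := by omega
      rw [← Finset.insert_Icc_right_eq_Icc_add_one (by omega), Finset.sum_insert (by simp)]
      have h2 := log_succ_le (n+1) (by omega)
      have h3 := ih hKn
      push_cast at h2 ⊢
      linarith

lemma sum_range_sub (x K : ℕ) (h : K ≤ x) (f : ℕ → ℝ) :
    ∑ i ∈ Finset.range (x - K + 1), f (x - i) = ∑ a ∈ Finset.Icc K x, f a := by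
  refine Finset.sum_nbij' (fun i => x - i) (fun a => x - a) ?_ ?_ ?_ ?_ ?_
  · intro i hi; simp only [Finset.mem_range] at hi; simp only [Finset.mem_Icc]; omega
  · intro a ha; simp only [Finset.mem_Icc] at ha; simp only [Finset.mem_range]; omega
  · intro i hi; simp only [Finset.mem_range] at hi; omega
  · intro a ha; simp only [Finset.mem_Icc] at ha; omega
  · intro i hi; rfl

def grid (K x1 x2 : ℕ) : Finset (ℕ × ℕ) :=
  Finset.range (x1 - K + 1) ×ˢ Finset.range (x2 - K + 1)

def rad (x1 x2 : ℕ) (i : ℕ × ℕ) : ℕ := max (x1 - i.1) (x2 - i.2)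

def AEvt {Ω : Type*} (X : ℕ × ℕ → Ω → Bool) (ρ : ℕ × ℕ → Ω → ℕ)
    (s : ℕ × ℕ) (r : ℕ) : Set Ω := {ω | X s ω = true ∧ r ≤ ρ s ω}

def UEvt {Ω : Type*} (X : ℕ × ℕ → Ω → Bool) (ρ : ℕ × ℕ → Ω → ℕ)
    (K x1 x2 : ℕ) : Set Ω :=
  ⋃ j ∈ grid K x1 x2, ⋂ i ∈ (grid K x1 x2).erase j, (AEvt X ρ i (rad x1 x2 i))ᶜ

lemma AEvt_eq {Ω : Type*} (X : ℕ × ℕ → Ω → Bool) (ρ : ℕ × ℕ → Ω → ℕ) (s : ℕ × ℕ) (r : ℕ) :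
    AEvt X ρ s r = (fun ω => (X s ω, ρ s ω)) ⁻¹' ({true} ×ˢ Set.Ici r) := by
  ext ω; simp [AEvt, Set.mem_prod]

lemma AEvt_meas {Ω : Type*} [MeasurableSpace Ω] {X : ℕ × ℕ → Ω → Bool} {ρ : ℕ × ℕ → Ω → ℕ}
    (hXm : ∀ s, Measurable (X s)) (hρm : ∀ s, Measurable (ρ s)) (s : ℕ × ℕ) (r : ℕ) :
    MeasurableSet (AEvt X ρ s r) := by
  rw [AEvt_eq]
  exact ((hXm s).prodMk (hρm s)) (MeasurableSet.prod (measurableSet_singleton _) measurableSet_Ici)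

lemma UEvt_meas {Ω : Type*} [MeasurableSpace Ω] {X : ℕ × ℕ → Ω → Bool} {ρ : ℕ × ℕ → Ω → ℕ}
    (hXm : ∀ s, Measurable (X s)) (hρm : ∀ s, Measurable (ρ s)) (K x1 x2 : ℕ) :
    MeasurableSet (UEvt X ρ K x1 x2) := by
  refine MeasurableSet.biUnion (Finset.countable_toSet _) fun j _ =>
    MeasurableSet.biInter (Finset.countable_toSet _) fun i _ =>
    (AEvt_meas hXm hρm i _).compl

lemma prob_inter_compl {Ω : Type*} [MeasureSpace Ω] [IsProbabilityMeasure (ℙ : Measure Ω)]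
    {X : ℕ × ℕ → Ω → Bool} {ρ : ℕ × ℕ → Ω → ℕ}
    (hXm : ∀ s, Measurable (X s)) (hρm : ∀ s, Measurable (ρ s))
    (hindep : iIndepFun (fun s ω => (X s ω, ρ s ω)) ℙ)
    (F : Finset (ℕ × ℕ)) (r : ℕ × ℕ → ℕ) :
    ℙ (⋂ i ∈ F, (AEvt X ρ i (r i))ᶜ) = ∏ i ∈ F, (1 - ℙ (AEvt X ρ i (r i))) := by
  have h := hindep.measure_inter_preimage_eq_mul F
    (sets := fun i => ({true} ×ˢ Set.Ici (r i))ᶜ)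
    (fun i _ => (MeasurableSet.prod (measurableSet_singleton _) measurableSet_Ici).compl)
  have he : ∀ i : ℕ × ℕ, (fun ω => (X i ω, ρ i ω)) ⁻¹' ({true} ×ˢ Set.Ici (r i))ᶜ
      = (AEvt X ρ i (r i))ᶜ := by
    intro i; rw [AEvt_eq, Set.preimage_compl]
  simp only [he] at h
  rw [h]
  refine Finset.prod_congr rfl fun i _ => ?_
  rw [prob_compl_eq_one_sub (AEvt_meas hXm hρm i (r i))]

lemma prob_AEvt {Ω : Type*} [MeasureSpace Ω] [IsProbabilityMeasure (ℙ : Measure Ω)]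
    {p : ℝ} {X : ℕ × ℕ → Ω → Bool} {ρ : ℕ × ℕ → Ω → ℕ}
    (hpair : ∀ s, IndepFun (X s) (ρ s) ℙ)
    (hX : ∀ s, ℙ {ω | X s ω = true} = ENNReal.ofReal p)
    (hρ : ∀ s, IdentDistrib (ρ s) (ρ (1, 1)) ℙ ℙ) (s : ℕ × ℕ) (r : ℕ) :
    ℙ (AEvt X ρ s r) = ENNReal.ofReal p * ℙ {ω | r ≤ ρ (1,1) ω} := by
  have h1 : AEvt X ρ s r = (X s) ⁻¹' {true} ∩ (ρ s) ⁻¹' (Set.Ici r) := by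
    ext ω; simp [AEvt]
  rw [h1, (hpair s).measure_inter_preimage_eq_mul _ _ (measurableSet_singleton _) measurableSet_Ici]
  have h2 : (X s) ⁻¹' {true} = {ω | X s ω = true} := rfl
  have h3 : ℙ ((ρ s) ⁻¹' (Set.Ici r)) = ℙ {ω | r ≤ ρ (1,1) ω} := by
    rw [(hρ s).measure_mem_eq measurableSet_Ici]; rfl
  rw [h2, h3, hX s]

lemma cover_of_not_mem {Ω : Type*} (X : ℕ × ℕ → Ω → Bool) (ρ : ℕ × ℕ → Ω → ℕ)
    {K x1 x2 : ℕ} (h1 : K ≤ x1) (h2 : K ≤ x2) {ω : Ω}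
    (hω : ω ∉ UEvt X ρ K x1 x2) :
    ∃ a b : ℕ × ℕ, a ≠ b ∧ X a ω = true ∧ X b ω = true ∧
      (a.1 ≤ x1 ∧ x1 ≤ a.1 + ρ a ω ∧ a.2 ≤ x2 ∧ x2 ≤ a.2 + ρ a ω) ∧
      (b.1 ≤ x1 ∧ x1 ≤ b.1 + ρ b ω ∧ b.2 ≤ x2 ∧ x2 ≤ b.2 + ρ b ω) := by
  simp only [UEvt, Set.mem_iUnion, not_exists, Set.mem_iInter, not_forall] at hω
  have hj0 : (0,0) ∈ grid K x1 x2 := by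
    simp [grid, Finset.mem_product]
  obtain ⟨a, ha, haA⟩ := hω (0,0) hj0
  rw [Set.notMem_compl_iff] at haA
  obtain ⟨b, hb, hbA⟩ := hω a (Finset.mem_of_mem_erase ha)
  rw [Set.notMem_compl_iff] at hbA
  have hmem : ∀ c : ℕ × ℕ, c ∈ grid K x1 x2 → ω ∈ AEvt X ρ c (rad x1 x2 c) →
      X c ω = true ∧ c.1 ≤ x1 ∧ x1 ≤ c.1 + ρ c ω ∧ c.2 ≤ x2 ∧ x2 ≤ c.2 + ρ c ω := by
    intro c hc hcA
    obtain ⟨hX, hρc⟩ := hcA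
    simp only [grid, Finset.mem_product, Finset.mem_range] at hc
    have hr1 : x1 - c.1 ≤ rad x1 x2 c := le_max_left _ _
    have hr2 : x2 - c.2 ≤ rad x1 x2 c := le_max_right _ _
    refine ⟨hX, by omega, by omega, by omega, by omega⟩
  obtain ⟨hXa, ha1, ha2, ha3, ha4⟩ := hmem a (Finset.mem_of_mem_erase ha) haA
  obtain ⟨hXb, hb1, hb2, hb3, hb4⟩ := hmem b (Finset.mem_of_mem_erase hb) hbA
  exact ⟨a, b, (Finset.ne_of_mem_erase hb).symm, hXa, hXb,
    ⟨ha1, ha2, ha3, ha4⟩, ⟨hb1, hb2, hb3, hb4⟩⟩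

lemma UEvt_bound {Ω : Type*} [MeasureSpace Ω] [IsProbabilityMeasure (ℙ : Measure Ω)]
    {p c : ℝ} {K : ℕ} (hp0 : 0 < p) (hp1 : p ≤ 1) (hc : 0 < c) (hK : 1 ≤ K)
    {X : ℕ × ℕ → Ω → Bool} {ρ : ℕ × ℕ → Ω → ℕ}
    (hXm : ∀ s, Measurable (X s)) (hρm : ∀ s, Measurable (ρ s))
    (hindep : iIndepFun (fun s ω => (X s ω, ρ s ω)) ℙ)
    (hpair : ∀ s, IndepFun (X s) (ρ s) ℙ)
    (hX : ∀ s, ℙ {ω | X s ω = true} = ENNReal.ofReal p)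
    (hρ : ∀ s, IdentDistrib (ρ s) (ρ (1, 1)) ℙ ℙ)
    (hcK : ∀ j : ℕ, K ≤ j → c / j ≤ (ℙ {ω | j ≤ ρ (1,1) ω}).toReal)
    {x1 x2 : ℕ} (h1 : K ≤ x1) (h2 : K ≤ x2) :
    ℙ (UEvt X ρ K x1 x2) ≤ ENNReal.ofReal (((x1:ℝ)+1) * ((x2:ℝ)+1) * (Real.exp 1 *
      Real.exp (-(p * c * ((Real.log ((x1:ℝ)+1) - Real.log K) *
        (Real.log ((x2:ℝ)+1) - Real.log K)))))) := by
  set P : ℕ → ℝ≥0∞ := fun r => ℙ {ω | r ≤ ρ (1,1) ω} with hP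
  set t : ℕ → ℝ := fun r => p * (P r).toReal with ht
  have ht0 : ∀ r, 0 ≤ t r := fun r => mul_nonneg hp0.le ENNReal.toReal_nonneg
  have ht1 : ∀ r, t r ≤ 1 := by
    intro r
    have h1 : (P r).toReal ≤ 1 := by
      have := prob_le_one (μ := (ℙ : Measure Ω)) (s := {ω | r ≤ ρ (1,1) ω})
      simpa using ENNReal.toReal_le_of_le_ofReal zero_le_one (by simpa using this)
    have h0 : 0 ≤ (P r).toReal := ENNReal.toReal_nonneg
    have he : t r = p * (P r).toReal := rfl
    rw [he]
    nlinarith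
  have hq : ∀ s r, ℙ (AEvt X ρ s r) = ENNReal.ofReal (t r) := by
    intro s r
    rw [prob_AEvt hpair hX hρ, ht]
    rw [ENNReal.ofReal_mul hp0.le, ENNReal.ofReal_toReal (measure_ne_top _ _)]
  have hcompl : ∀ s r, (1:ℝ≥0∞) - ℙ (AEvt X ρ s r) = ENNReal.ofReal (1 - t r) := by
    intro s r
    rw [hq, ENNReal.ofReal_sub _ (ht0 r), ENNReal.ofReal_one]
  set L1 : ℝ := Real.log ((x1:ℝ)+1) - Real.log K with hL1
  set L2 : ℝ := Real.log ((x2:ℝ)+1) - Real.log K with hL2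
  have hL1nn : 0 ≤ L1 := by
    rw [hL1]
    have hx : (K:ℝ) ≤ (x1:ℝ)+1 := by
      have : (K:ℝ) ≤ (x1:ℝ) := by exact_mod_cast h1
      linarith
    have := Real.log_le_log (by positivity : (0:ℝ) < (K:ℝ)) hx
    linarith
  have hL2nn : 0 ≤ L2 := by
    rw [hL2]
    have hx : (K:ℝ) ≤ (x2:ℝ)+1 := by
      have : (K:ℝ) ≤ (x2:ℝ) := by exact_mod_cast h2
      linarith
    have := Real.log_le_log (by positivity : (0:ℝ) < (K:ℝ)) hx
    linarith
  set G := grid K x1 x2 with hG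
  set r := rad x1 x2 with hr
  set S : ℝ := ∑ i ∈ G, t (r i) with hS
  -- lower bound for S
  have hSlb : p * c * (L1 * L2) ≤ S := by
    have hterm : ∀ i ∈ G, p * c * ((1/((x1 - i.1 : ℕ):ℝ)) * (1/((x2 - i.2 : ℕ):ℝ))) ≤ t (r i) := by
      intro i hi
      simp only [hG, grid, Finset.mem_product, Finset.mem_range] at hi
      set a := x1 - i.1 with ha
      set b := x2 - i.2 with hb
      have hKa : K ≤ a := by omega
      have hKb : K ≤ b := by omega
      have hra : r i = max a b := rfl
      have hKr : K ≤ r i := by rw [hra]; omega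
      have hrab : r i ≤ a * b := by
        rw [hra]
        have h1' : a ≤ a * b := Nat.le_mul_of_pos_right a (by omega)
        have h2' : b ≤ a * b := Nat.le_mul_of_pos_left b (by omega)
        omega
      have hPc : c / (r i : ℝ) ≤ (P (r i)).toReal := hcK _ hKr
      have hrpos : (0:ℝ) < (r i : ℝ) := by exact_mod_cast by omega
      have habpos : (0:ℝ) < ((a:ℝ) * (b:ℝ)) := by
        have : (0:ℝ) < (a:ℝ) := by exact_mod_cast by omega
        have : (0:ℝ) < (b:ℝ) := by exact_mod_cast by omega
        positivity
      have hcab : c / ((a:ℝ) * (b:ℝ)) ≤ c / (r i : ℝ) := by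
        apply div_le_div_of_nonneg_left hc.le hrpos
        exact_mod_cast hrab
      have : c / ((a:ℝ) * (b:ℝ)) ≤ (P (r i)).toReal := hcab.trans hPc
      rw [ht]
      calc p * c * ((1/((a:ℕ):ℝ)) * (1/((b:ℕ):ℝ)))
          = p * (c / ((a:ℝ) * (b:ℝ))) := by field_simp
        _ ≤ p * (P (r i)).toReal := by
            exact mul_le_mul_of_nonneg_left this hp0.le
    have hsum : ∑ i ∈ G, p * c * ((1/((x1 - i.1 : ℕ):ℝ)) * (1/((x2 - i.2 : ℕ):ℝ)))
        = p * c * ((∑ a ∈ Finset.Icc K x1, (1/(a:ℝ))) * (∑ b ∈ Finset.Icc K x2, (1/(b:ℝ)))) := by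
      have e1 : ∑ i ∈ G, p * c * ((1/((x1 - i.1 : ℕ):ℝ)) * (1/((x2 - i.2 : ℕ):ℝ)))
          = ∑ i1 ∈ Finset.range (x1 - K + 1), ∑ i2 ∈ Finset.range (x2 - K + 1),
              p * c * ((1/((x1 - i1 : ℕ):ℝ)) * (1/((x2 - i2 : ℕ):ℝ))) := by
        rw [hG, grid]
        exact Finset.sum_product _ _ _
      rw [e1, ← sum_range_sub x1 K h1 (fun a => (1:ℝ)/a), ← sum_range_sub x2 K h2 (fun a => (1:ℝ)/a)]
      rw [Finset.sum_mul_sum, Finset.mul_sum]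
      refine Finset.sum_congr rfl fun i1 _ => ?_
      rw [Finset.mul_sum]
    have hH1 : L1 ≤ ∑ a ∈ Finset.Icc K x1, (1/(a:ℝ)) := by
      have := harm_lb K hK x1 h1; rw [hL1]; push_cast at this ⊢; linarith
    have hH2 : L2 ≤ ∑ a ∈ Finset.Icc K x2, (1/(a:ℝ)) := by
      have := harm_lb K hK x2 h2; rw [hL2]; push_cast at this ⊢; linarith
    calc p * c * (L1 * L2)
        ≤ p * c * ((∑ a ∈ Finset.Icc K x1, (1/(a:ℝ))) * (∑ b ∈ Finset.Icc K x2, (1/(b:ℝ)))) := by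
          apply mul_le_mul_of_nonneg_left _ (by positivity)
          exact mul_le_mul hH1 hH2 hL2nn (le_trans hL1nn hH1)
      _ = ∑ i ∈ G, p * c * ((1/((x1 - i.1 : ℕ):ℝ)) * (1/((x2 - i.2 : ℕ):ℝ))) := hsum.symm
      _ ≤ S := Finset.sum_le_sum hterm
  set E : ℝ := Real.exp 1 * Real.exp (-(p*c*(L1*L2))) with hE
  have hstep2 : ∀ j ∈ G, ℙ (⋂ i ∈ G.erase j, (AEvt X ρ i (r i))ᶜ) ≤ ENNReal.ofReal E := by
    intro j hj
    rw [prob_inter_compl hXm hρm hindep]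
    have hprod : ∏ i ∈ G.erase j, (1 - ℙ (AEvt X ρ i (r i)))
        = ENNReal.ofReal (∏ i ∈ G.erase j, (1 - t (r i))) := by
      rw [ENNReal.ofReal_prod_of_nonneg (fun i _ => by linarith [ht1 (r i)])]
      exact Finset.prod_congr rfl fun i _ => hcompl i (r i)
    rw [hprod]
    apply ENNReal.ofReal_le_ofReal
    have hsumneg : ∑ i ∈ G.erase j, -(t (r i)) = -∑ i ∈ G.erase j, t (r i) := by
      simp
    calc ∏ i ∈ G.erase j, (1 - t (r i))
        ≤ ∏ i ∈ G.erase j, Real.exp (-(t (r i))) := by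
          apply Finset.prod_le_prod (fun i _ => by linarith [ht1 (r i)])
            (fun i _ => by linarith [Real.add_one_le_exp (-(t (r i)))])
      _ = Real.exp (∑ i ∈ G.erase j, -(t (r i))) := (Real.exp_sum _ _).symm
      _ ≤ Real.exp (1 - S) := by
          apply Real.exp_le_exp.2
          have hsum := Finset.sum_erase_add G (fun i => t (r i)) hj
          rw [hsumneg]
          have h1' := ht1 (r j)
          have h0' := ht0 (r j)
          rw [hS]
          linarith [hsum]
      _ ≤ Real.exp (1 - p*c*(L1*L2)) := Real.exp_le_exp.2 (by linarith)
      _ = E := by rw [hE, ← Real.exp_add]; ring_nf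
  have hstep1 : ℙ (UEvt X ρ K x1 x2) ≤ ∑ j ∈ G, ℙ (⋂ i ∈ G.erase j, (AEvt X ρ i (r i))ᶜ) := by
    rw [UEvt, ← hG, ← hr]
    exact measure_biUnion_finset_le _ _
  have hcard : G.card ≤ (x1+1)*(x2+1) := by
    rw [hG, grid, Finset.card_product, Finset.card_range, Finset.card_range]
    exact Nat.mul_le_mul (by omega) (by omega)
  have hEnn : 0 ≤ E := by positivity
  calc ℙ (UEvt X ρ K x1 x2)
      ≤ ∑ j ∈ G, ℙ (⋂ i ∈ G.erase j, (AEvt X ρ i (r i))ᶜ) := hstep1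
    _ ≤ ∑ _j ∈ G, ENNReal.ofReal E := Finset.sum_le_sum hstep2
    _ = G.card • ENNReal.ofReal E := Finset.sum_const _
    _ = (G.card : ℝ≥0∞) * ENNReal.ofReal E := nsmul_eq_mul _ _
    _ ≤ ENNReal.ofReal (((x1:ℝ)+1)*((x2:ℝ)+1)) * ENNReal.ofReal E := by
        apply mul_le_mul_left
        calc (G.card : ℝ≥0∞) ≤ (((x1+1)*(x2+1) : ℕ) : ℝ≥0∞) := Nat.cast_le.2 hcard
          _ = ENNReal.ofReal (((x1:ℝ)+1)*((x2:ℝ)+1)) := by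
              rw [← ENNReal.ofReal_natCast]
              congr 1
              push_cast
              ring
    _ = ENNReal.ofReal (((x1:ℝ)+1)*((x2:ℝ)+1) * E) := (ENNReal.ofReal_mul (by positivity)).symm

lemma exp_bound {pc Kr u v : ℝ} (hKr : 1 ≤ Kr) (hu : Kr ≤ u) (hv : Kr ≤ v) (hpc : 0 < pc)
    (h8u : 8 ≤ pc * (Real.log u - Real.log Kr)) (h8v : 8 ≤ pc * (Real.log v - Real.log Kr)) :
    u * v * (Real.exp 1 * Real.exp (-(pc * ((Real.log u - Real.log Kr) *
      (Real.log v - Real.log Kr)))))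
    ≤ Real.exp 1 * Kr^8 * (1/u^3) * (1/v^3) := by
  have hKr0 : (0:ℝ) < Kr := by linarith
  have hu0 : (0:ℝ) < u := by linarith
  have hv0 : (0:ℝ) < v := by linarith
  set Lu := Real.log u - Real.log Kr with hLu
  set Lv := Real.log v - Real.log Kr with hLv
  have hLu0 : 0 ≤ Lu := by
    have := Real.log_le_log hKr0 hu; rw [hLu]; linarith
  have hLv0 : 0 ≤ Lv := by
    have := Real.log_le_log hKr0 hv; rw [hLv]; linarith
  have hkey : 4*Lu + 4*Lv ≤ pc * (Lu * Lv) := by nlinarith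
  have hexp1 : Real.exp (-(pc * (Lu * Lv))) ≤ Real.exp (-(4*Lu)) * Real.exp (-(4*Lv)) := by
    rw [← Real.exp_add]
    apply Real.exp_le_exp.2
    linarith
  have he_u : Real.exp (-(4*Lu)) = (Kr/u)^4 := by
    rw [show -(4*Lu) = Real.log ((Kr/u)^4) by
      rw [Real.log_pow, Real.log_div hKr0.ne' hu0.ne']; push_cast; rw [hLu]; ring]
    exact Real.exp_log (by positivity)
  have he_v : Real.exp (-(4*Lv)) = (Kr/v)^4 := by
    rw [show -(4*Lv) = Real.log ((Kr/v)^4) by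
      rw [Real.log_pow, Real.log_div hKr0.ne' hv0.ne']; push_cast; rw [hLv]; ring]
    exact Real.exp_log (by positivity)
  have hfin : u * v * (Real.exp 1 * ((Kr/u)^4 * (Kr/v)^4))
      = Real.exp 1 * Kr^8 * (1/u^3) * (1/v^3) := by
    field_simp
  calc u * v * (Real.exp 1 * Real.exp (-(pc * (Lu * Lv))))
      ≤ u * v * (Real.exp 1 * ((Kr/u)^4 * (Kr/v)^4)) := by
        have h := hexp1
        rw [he_u, he_v] at h
        have : (0:ℝ) ≤ u * v * Real.exp 1 := by positivity
        nlinarith [Real.exp_pos 1]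
    _ = Real.exp 1 * Kr^8 * (1/u^3) * (1/v^3) := hfin

/-- positive half of Proposition 2.3(ii), d = 2: If
`liminf_j j·P(ρ ≥ j) > 0` and `p ∈ (0,1)`, then almost surely there exists
`t ∈ ℕ²` such that every point of `t + ℕ²` lies in at least two distinct open
boxes `i + [0, ρ_i]²`. -/
theorem stmt17 {Ω : Type*} [MeasureSpace Ω] [IsProbabilityMeasure (ℙ : Measure Ω)]
    (p : ℝ) (hp : p ∈ Set.Ioo (0 : ℝ) 1)
    (X : ℕ × ℕ → Ω → Bool) (ρ : ℕ × ℕ → Ω → ℕ)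
    (hXm : ∀ s, Measurable (X s)) (hρm : ∀ s, Measurable (ρ s))
    (hindep : iIndepFun (fun s ω => (X s ω, ρ s ω)) ℙ)
    (hpair : ∀ s, IndepFun (X s) (ρ s) ℙ)
    (hX : ∀ s, ℙ {ω | X s ω = true} = ENNReal.ofReal p)
    (hρ : ∀ s, IdentDistrib (ρ s) (ρ (1, 1)) ℙ ℙ)
    (hliminf : 0 < Filter.atTop.liminf
      (fun j : ℕ => (j : ℝ≥0∞) * ℙ {ω | j ≤ ρ (1, 1) ω})) :
    ∀ᵐ ω ∂ℙ, ∃ t : ℕ × ℕ, ∀ x : ℕ × ℕ, t.1 ≤ x.1 → t.2 ≤ x.2 →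
      ∃ a b : ℕ × ℕ, a ≠ b ∧ X a ω = true ∧ X b ω = true ∧
        (a.1 ≤ x.1 ∧ x.1 ≤ a.1 + ρ a ω ∧ a.2 ≤ x.2 ∧ x.2 ≤ a.2 + ρ a ω) ∧
        (b.1 ≤ x.1 ∧ x.1 ≤ b.1 + ρ b ω ∧ b.2 ≤ x.2 ∧ x.2 ≤ b.2 + ρ b ω) := by
  obtain ⟨hp0, hp1'⟩ := hp
  have hp1 : p ≤ 1 := hp1'.le
  -- Step 1: extract c, K
  obtain ⟨c, hc0, K, hK1, hcK⟩ : ∃ c : ℝ, 0 < c ∧ ∃ K : ℕ, 1 ≤ K ∧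
      ∀ j : ℕ, K ≤ j → c / j ≤ (ℙ {ω | j ≤ ρ (1,1) ω}).toReal := by
    set L := Filter.atTop.liminf (fun j : ℕ => (j : ℝ≥0∞) * ℙ {ω | j ≤ ρ (1,1) ω}) with hL
    set ε := min L 1 with hε
    have hε0 : 0 < ε := lt_min hliminf zero_lt_one
    have hεtop : ε ≠ ⊤ := ne_top_of_le_ne_top ENNReal.one_ne_top (min_le_right _ _)
    have hhalf : ε / 2 < L :=
      lt_of_lt_of_le (ENNReal.half_lt_self hε0.ne' hεtop) (min_le_left _ _)
    have hev := Filter.eventually_lt_of_lt_liminf hhalf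
    obtain ⟨K0, hK0⟩ := Filter.eventually_atTop.1 hev
    have hhalf0 : ε / 2 ≠ 0 := by
      simp only [ne_eq, ENNReal.div_eq_zero_iff]
      push_neg
      exact ⟨hε0.ne', by norm_num⟩
    have hhalftop : ε / 2 ≠ ⊤ := by
      exact ne_top_of_le_ne_top hεtop (ENNReal.half_le_self)
    refine ⟨(ε/2).toReal, ENNReal.toReal_pos hhalf0 hhalftop, max K0 1, le_max_right _ _, ?_⟩
    intro j hj
    have hj0 : 1 ≤ j := le_trans (le_max_right _ _) hj
    have h := (hK0 j (le_trans (le_max_left _ _) hj)).le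
    have hfin : (j : ℝ≥0∞) * ℙ {ω | j ≤ ρ (1,1) ω} ≠ ⊤ :=
      ENNReal.mul_ne_top (ENNReal.natCast_ne_top j) (measure_ne_top _ _)
    have h2 := ENNReal.toReal_mono hfin h
    rw [ENNReal.toReal_mul] at h2
    have hjt : ((j : ℝ≥0∞)).toReal = (j:ℝ) := rfl
    rw [hjt] at h2
    have hjpos : (0:ℝ) < j := by exact_mod_cast hj0
    rw [div_le_iff₀ hjpos]
    nlinarith [h2]
  -- Step 2: choose N
  obtain ⟨N, hN⟩ := exists_nat_ge (max (K:ℝ) ((K:ℝ) * Real.exp (8 / (p*c))))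
  have hK0' : (0:ℝ) < K := by exact_mod_cast hK1
  have hpc : 0 < p*c := by positivity
  have hKN : K ≤ N := by
    have : (K:ℝ) ≤ N := le_trans (le_max_left _ _) hN
    exact_mod_cast this
  have h8N : 8 ≤ p * c * (Real.log ((N:ℝ)+1) - Real.log K) := by
    have h1 : (K:ℝ) * Real.exp (8/(p*c)) ≤ (N:ℝ)+1 := by
      have := le_trans (le_max_right _ _) hN; linarith
    have h2 : Real.log ((K:ℝ) * Real.exp (8/(p*c))) ≤ Real.log ((N:ℝ)+1) :=
      Real.log_le_log (by positivity) h1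
    rw [Real.log_mul hK0'.ne' (Real.exp_ne_zero _), Real.log_exp] at h2
    have h3 : 8/(p*c) ≤ Real.log ((N:ℝ)+1) - Real.log K := by linarith
    calc (8:ℝ) = (8/(p*c)) * (p*c) := by field_simp
      _ ≤ (Real.log ((N:ℝ)+1) - Real.log K) * (p*c) := by
          apply mul_le_mul_of_nonneg_right h3 hpc.le
      _ = p * c * (Real.log ((N:ℝ)+1) - Real.log K) := by ring
  -- Step 3: per-x bound
  set C : ℝ := Real.exp 1 * (K:ℝ)^8 with hC
  have hCnn : 0 ≤ C := by rw [hC]; positivity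
  have hxb : ∀ x1 x2 : ℕ, N ≤ x1 → N ≤ x2 → ℙ (UEvt X ρ K x1 x2) ≤
      ENNReal.ofReal C * ENNReal.ofReal (1/((x1:ℝ)+1)^3) *
        ENNReal.ofReal (1/((x2:ℝ)+1)^3) := by
    intro x1 x2 hx1 hx2
    have h1 : K ≤ x1 := le_trans hKN hx1
    have h2 : K ≤ x2 := le_trans hKN hx2
    refine le_trans (UEvt_bound hp0 hp1 hc0 hK1 hXm hρm hindep hpair hX hρ hcK h1 h2) ?_
    rw [← ENNReal.ofReal_mul hCnn, ← ENNReal.ofReal_mul (by positivity)]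
    apply ENNReal.ofReal_le_ofReal
    have hmN1 : Real.log ((N:ℝ)+1) ≤ Real.log ((x1:ℝ)+1) := by
      apply Real.log_le_log (by positivity)
      have : (N:ℝ) ≤ x1 := by exact_mod_cast hx1
      linarith
    have hmN2 : Real.log ((N:ℝ)+1) ≤ Real.log ((x2:ℝ)+1) := by
      apply Real.log_le_log (by positivity)
      have : (N:ℝ) ≤ x2 := by exact_mod_cast hx2
      linarith
    have hKx1 : (K:ℝ) ≤ (x1:ℝ)+1 := by
      have : (K:ℝ) ≤ (x1:ℝ) := by exact_mod_cast h1
      linarith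
    have hKx2 : (K:ℝ) ≤ (x2:ℝ)+1 := by
      have : (K:ℝ) ≤ (x2:ℝ) := by exact_mod_cast h2
      linarith
    have hb := exp_bound (pc := p*c) (Kr := (K:ℝ)) (u := (x1:ℝ)+1) (v := (x2:ℝ)+1)
      (by exact_mod_cast hK1) hKx1 hKx2 hpc (by nlinarith) (by nlinarith)
    refine le_trans hb (le_of_eq ?_)
    rw [hC]
  -- Step 4: summability
  have hsum3 : ∑' n : ℕ, ENNReal.ofReal (1/((n:ℝ)+1)^3) ≠ ⊤ := by
    have hs : Summable (fun n : ℕ => 1/((n:ℝ)+1)^3) := by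
      have h := (summable_nat_add_iff (f := fun n : ℕ => 1/(n:ℝ)^3) 1).2
        (Real.summable_one_div_nat_pow.2 (by norm_num))
      convert h using 2 with n
      push_cast
      rfl
      push_cast; rfl
    rw [← ENNReal.ofReal_tsum_of_nonneg (fun n => by positivity) hs]
    exact ENNReal.ofReal_ne_top
  set U' : ℕ × ℕ → Set Ω := fun y => UEvt X ρ K (N+y.1) (N+y.2) with hU'
  have hU'm : ∀ y, MeasurableSet (U' y) := fun y => UEvt_meas hXm hρm _ _ _
  have htsum : ∑' y : ℕ × ℕ, ℙ (U' y) ≠ ⊤ := by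
    have hshift : ∀ m : ℕ, (1:ℝ)/(((N+m : ℕ):ℝ)+1)^3 ≤ 1/((m:ℝ)+1)^3 := by
      intro m
      apply one_div_le_one_div_of_le (by positivity)
      have : ((m:ℕ):ℝ) + 1 ≤ ((N+m : ℕ):ℝ) + 1 := by push_cast; linarith [hK0'.le]
      gcongr
    have hb : ∀ y : ℕ × ℕ, ℙ (U' y) ≤ ENNReal.ofReal C *
        ENNReal.ofReal (1/((y.1:ℝ)+1)^3) * ENNReal.ofReal (1/((y.2:ℝ)+1)^3) := by
      intro y
      refine le_trans (hxb (N+y.1) (N+y.2) (by omega) (by omega)) ?_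
      have e1 := ENNReal.ofReal_le_ofReal (hshift y.1)
      have e2 := ENNReal.ofReal_le_ofReal (hshift y.2)
      exact mul_le_mul' (mul_le_mul' le_rfl e1) e2
    refine ne_top_of_le_ne_top ?_ (ENNReal.tsum_le_tsum hb)
    have : ∑' y : ℕ × ℕ, ENNReal.ofReal C * ENNReal.ofReal (1/((y.1:ℝ)+1)^3) *
        ENNReal.ofReal (1/((y.2:ℝ)+1)^3)
        = ENNReal.ofReal C * (∑' n : ℕ, ENNReal.ofReal (1/((n:ℝ)+1)^3)) *
          (∑' n : ℕ, ENNReal.ofReal (1/((n:ℝ)+1)^3)) := by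
      rw [ENNReal.tsum_prod']
      simp_rw [ENNReal.tsum_mul_left]
      rw [ENNReal.tsum_mul_right, ENNReal.tsum_mul_left]
    rw [this]
    exact ENNReal.mul_ne_top (ENNReal.mul_ne_top ENNReal.ofReal_ne_top hsum3) hsum3
  -- Step 5: Borel–Cantelli
  have hae : ∀ᵐ ω ∂(ℙ : Measure Ω), {y : ℕ × ℕ | ω ∈ U' y}.Finite := by
    have hint : ∫⁻ ω, ∑' y : ℕ × ℕ, (U' y).indicator (fun _ => (1:ℝ≥0∞)) ω ∂ℙ
        = ∑' y : ℕ × ℕ, ℙ (U' y) := by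
      rw [lintegral_tsum (fun y => (measurable_const.indicator (hU'm y)).aemeasurable)]
      exact tsum_congr fun y => lintegral_indicator_one (hU'm y)
    have hfin : ∀ᵐ ω ∂(ℙ : Measure Ω),
        (∑' y : ℕ × ℕ, (U' y).indicator (fun _ => (1:ℝ≥0∞)) ω) < ⊤ := by
      apply ae_lt_top (Measurable.ennreal_tsum fun y => measurable_const.indicator (hU'm y))
      rw [hint]; exact htsum
    filter_upwards [hfin] with ω hω
    by_contra hinf
    replace hinf : {y : ℕ × ℕ | ω ∈ U' y}.Infinite := hinf
    have heq : ∀ y : ℕ × ℕ, (U' y).indicator (fun _ => (1:ℝ≥0∞)) ω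
        = Set.indicator {y : ℕ × ℕ | ω ∈ U' y} (fun _ => (1:ℝ≥0∞)) y := by
      intro y
      by_cases h : ω ∈ U' y <;> simp [h, Set.indicator]
    rw [tsum_congr heq, ← tsum_subtype] at hω
    haveI := hinf.to_subtype
    rw [ENNReal.tsum_const_eq_top_of_ne_zero one_ne_zero] at hω
    exact (lt_irrefl _ hω).elim
  -- Step 6: conclusion
  filter_upwards [hae] with ω hω
  set F := hω.toFinset with hF
  set M := F.sup (fun y : ℕ × ℕ => max y.1 y.2) with hM
  refine ⟨(N + M + 1, N + M + 1), ?_⟩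
  intro x hx1 hx2
  have hx1' : N + M + 1 ≤ x.1 := hx1
  have hx2' : N + M + 1 ≤ x.2 := hx2
  have hnot : ω ∉ UEvt X ρ K x.1 x.2 := by
    intro hmem
    have hy : ω ∈ U' (x.1 - N, x.2 - N) := by
      rw [hU']
      have e1 : N + (x.1 - N) = x.1 := by omega
      have e2 : N + (x.2 - N) = x.2 := by omega
      simp only [e1, e2]
      exact hmem
    have hmemF : (x.1 - N, x.2 - N) ∈ F := hω.mem_toFinset.2 hy
    have h5 : max (x.1 - N) (x.2 - N) ≤ M :=
      Finset.le_sup (f := fun y : ℕ × ℕ => max y.1 y.2) hmemF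
    omega
  exact cover_of_not_mem X ρ (le_trans hKN (by omega)) (le_trans hKN (by omega)) hnot
end

section
/- Let $(X_{\mathbf{i}})_{\mathbf{i}\in\mathbb{N}^2}$ be i.i.d. Bernoulli($p$), $p>0$, and $(\rho_{\mathbf{i}})$ i.i.d. $\mathbb{N}$-valued, independent of the $X$'s, with $\mathbb{E}[\rho^2] = \infty$. For $n \ge 1$ let $L_n$ be the L-shaped set of sites $(k,l)$ with $\max(k,l)=n$, $1 \le k,l \le n$, and let $A_n$ be the event that some $\mathbf{i} \in L_n$ has $X_{\mathbf{i}}=1$ and $\rho_{\mathbf{i}} \ge n+1$. Then $\mathbb{P}(A_n) = 1 - (1 - p\,\mathbb{P}(\rho \ge n+1))^{2n-1}$, the $A_n$ are independent, and almost surely infinitely many $A_n$ occur. -/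
open MeasureTheory ProbabilityTheory Filter
open scoped ENNReal

private lemma sum_odd_sq (m : ℕ) : ∑ n ∈ Finset.range m, (2 * n + 1) = m ^ 2 := by
  induction m with
  | zero => simp
  | succ m ih => rw [Finset.sum_range_succ, ih]; ring

private lemma pow_mul_le_one {r : ℝ} (h0 : 0 ≤ r) (h1 : r ≤ 1) (m : ℕ) :
    (1 - r) ^ m * (1 + (m : ℝ) * r) ≤ 1 := by
  induction m with
  | zero => simp
  | succ m ih =>
    have hr : (0:ℝ) ≤ (1 - r) ^ m := pow_nonneg (by linarith) m
    have key : (1 - r) * (1 + ((m:ℝ) + 1) * r) ≤ 1 + (m:ℝ) * r := by nlinarith [mul_nonneg (Nat.cast_nonneg m : (0:ℝ) ≤ m) (mul_self_nonneg r), mul_self_nonneg r]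
    calc (1-r)^(m+1) * (1 + ((m+1 : ℕ):ℝ)*r)
        = (1-r)^m * ((1-r)*(1+((m:ℝ)+1)*r)) := by push_cast; ring
      _ ≤ (1-r)^m * (1 + (m:ℝ)*r) := by
          apply mul_le_mul_of_nonneg_left key hr
      _ ≤ 1 := ih

private lemma half_min_le {r : ℝ} (h0 : 0 ≤ r) (h1 : r ≤ 1) (m : ℕ) :
    2⁻¹ * min ((m:ℝ) * r) 1 ≤ 1 - (1 - r) ^ m := by
  have key := pow_mul_le_one h0 h1 m
  have hp : (0:ℝ) ≤ (1-r)^m := pow_nonneg (by linarith) m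
  have ht : (0:ℝ) ≤ (m:ℝ) * r := by positivity
  rcases le_total ((m:ℝ)*r) 1 with h | h
  · rw [min_eq_left h]
    nlinarith [mul_nonneg hp ht]
  · rw [min_eq_right h]
    nlinarith [mul_le_mul_of_nonneg_left h hp]

private lemma tsum_min_eq_top {c : ℕ → ℝ≥0∞} (hc : ∀ n, c n ≠ ⊤) (h : ∑' n, c n = ⊤) :
    ∑' n, min (c n) 1 = ⊤ := by
  by_cases hinf : {n | 1 ≤ c n}.Infinite
  · have : Infinite {n | 1 ≤ c n} := hinf.to_subtype
    refine top_le_iff.mp ?_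
    calc (⊤:ℝ≥0∞) = ∑' _ : {n | 1 ≤ c n}, (1:ℝ≥0∞) :=
          (ENNReal.tsum_const_eq_top_of_ne_zero one_ne_zero).symm
      _ = ∑' n : {n | 1 ≤ c n}, min (c (n:ℕ)) 1 :=
          tsum_congr fun ⟨n, hn⟩ => (min_eq_right hn).symm
      _ ≤ ∑' n, min (c n) 1 :=
          ENNReal.tsum_comp_le_tsum_of_injective Subtype.val_injective _
  · rw [Set.not_infinite] at hinf
    set d : ℕ → ℝ≥0∞ := fun n => if 1 ≤ c n then 0 else c n with hd
    have hsplit : ∀ n, c n = {n | 1 ≤ c n}.indicator c n + d n := by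
      intro n
      by_cases h1 : 1 ≤ c n
      · simp [hd, h1, Set.indicator_of_mem (Set.mem_setOf.mpr h1)]
      · simp [hd, h1, Set.indicator_of_notMem (fun hx => h1 hx)]
    have hind : ∑' n, ({n | 1 ≤ c n}.indicator c) n ≠ ⊤ := by
      rw [tsum_eq_sum (s := hinf.toFinset)
        (fun b hb => Set.indicator_of_notMem (by simpa using hb) c)]
      refine (ENNReal.sum_lt_top.mpr fun i _ => ?_).ne
      refine lt_of_le_of_lt (Set.indicator_le_self _ _ i) (hc i).lt_top
    have hdtop : ∑' n, d n = ⊤ := by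
      by_contra hne
      have : ∑' n, c n ≠ ⊤ := by
        rw [tsum_congr hsplit, ENNReal.tsum_add]
        exact ENNReal.add_ne_top.mpr ⟨hind, hne⟩
      exact this h
    refine top_le_iff.mp ?_
    rw [← hdtop]
    refine ENNReal.tsum_le_tsum fun n => ?_
    by_cases h1 : 1 ≤ c n
    · simp [hd, h1]
    · push_neg at h1
      simp only [hd, if_neg (not_le.mpr h1)]
      exact le_min le_rfl h1.le

/-- core of Proposition 2.4, d = 2: With `E[ρ²] = ∞`, the events
`A_n = {∃ (k,l) with max(k,l) = n, 1 ≤ k,l ≤ n, X_{(k,l)} = 1, ρ_{(k,l)} ≥ n+1}`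
satisfy `P(A_n) = 1 - (1 - p·P(ρ ≥ n+1))^{2n-1}` for `n ≥ 1`, the `A_n` (for
`n ≥ 1`) are independent, and almost surely infinitely many `A_n` occur. -/
theorem stmt18 {Ω : Type*} [MeasureSpace Ω] [IsProbabilityMeasure (ℙ : Measure Ω)]
    (p : ℝ) (hp : 0 < p) (hp1 : p ≤ 1)
    (X : ℕ × ℕ → Ω → Bool) (ρ : ℕ × ℕ → Ω → ℕ)
    (hXm : ∀ s, Measurable (X s)) (hρm : ∀ s, Measurable (ρ s))
    (hindep : iIndepFun (fun s ω => (X s ω, ρ s ω)) ℙ)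
    (hpair : ∀ s, IndepFun (X s) (ρ s) ℙ)
    (hX : ∀ s, ℙ {ω | X s ω = true} = ENNReal.ofReal p)
    (hρ : ∀ s, IdentDistrib (ρ s) (ρ (1, 1)) ℙ ℙ)
    (hmean : ∫⁻ ω, ((ρ (1, 1) ω : ℝ≥0∞)) ^ 2 ∂ℙ = ⊤)
    (A : ℕ → Set Ω)
    (hA : ∀ n, A n = {ω | ∃ s : ℕ × ℕ, 1 ≤ s.1 ∧ 1 ≤ s.2 ∧ max s.1 s.2 = n ∧
      X s ω = true ∧ n + 1 ≤ ρ s ω}) :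
    (∀ n : ℕ, 1 ≤ n → (ℙ (A n)).toReal =
        1 - (1 - p * (ℙ {ω | n + 1 ≤ ρ (1, 1) ω}).toReal) ^ (2 * n - 1)) ∧
      iIndepSet (fun n : ℕ => A (n + 1)) ℙ ∧
      ∀ᵐ ω ∂ℙ, {n : ℕ | 1 ≤ n ∧ ω ∈ A n}.Infinite := by
  classical
  set Y : ℕ × ℕ → Ω → Bool × ℕ := fun s ω => (X s ω, ρ s ω) with hYdef
  have hYm : ∀ s, Measurable (Y s) := fun s => (hXm s).prodMk (hρm s)
  set e : ℕ → ℝ≥0∞ := fun n => ℙ {ω | n + 1 ≤ ρ (1, 1) ω} with he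
  have hele : ∀ n, e n ≤ 1 := fun n => prob_le_one
  have hetop : ∀ n, e n ≠ ⊤ := fun n => ((hele n).trans_lt ENNReal.one_lt_top).ne
  set q : ℕ → ℝ := fun n => (e n).toReal with hq
  have hq0 : ∀ n, 0 ≤ q n := fun n => ENNReal.toReal_nonneg
  have hq1 : ∀ n, q n ≤ 1 := by
    intro n
    calc (e n).toReal ≤ (1 : ℝ≥0∞).toReal :=
          ENNReal.toReal_mono ENNReal.one_ne_top (hele n)
      _ = 1 := by simp
  have heq : ∀ n, e n = ENNReal.ofReal (q n) := fun n => (ENNReal.ofReal_toReal (hetop n)).symm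
  set r : ℕ → ℝ := fun n => p * q n with hr
  have hr0 : ∀ n, 0 ≤ r n := fun n => mul_nonneg hp.le (hq0 n)
  have hr1 : ∀ n, r n ≤ 1 := fun n =>
    (mul_le_one₀ hp1 (hq0 n) (hq1 n))
  -- the basic events
  set B : ℕ → ℕ × ℕ → Set Ω := fun n s => {ω | X s ω = true ∧ n + 1 ≤ ρ s ω} with hB
  have hBpre : ∀ n s, B n s = Y s ⁻¹' ({true} ×ˢ Set.Ici (n + 1)) := by
    intro n s; ext ω
    simp only [hB, hYdef, Set.mem_setOf_eq, Set.mem_preimage, Set.mem_prod,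
      Set.mem_singleton_iff, Set.mem_Ici]
  have hBcm : ∀ n s, MeasurableSet[MeasurableSpace.comap (Y s) inferInstance] (B n s) :=
    fun n s => ⟨{true} ×ˢ Set.Ici (n + 1),
      (measurableSet_singleton true).prod measurableSet_Ici, (hBpre n s).symm⟩
  have hBm : ∀ n s, MeasurableSet (B n s) := fun n s => by
    rw [hBpre]; exact (hYm s) ((measurableSet_singleton true).prod measurableSet_Ici)
  have hBprob : ∀ n s, ℙ (B n s) = ENNReal.ofReal (r n) := by
    intro n s
    have h1 : B n s = (X s ⁻¹' {true}) ∩ (ρ s ⁻¹' Set.Ici (n + 1)) := by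
      ext ω; simp only [hB, Set.mem_setOf_eq, Set.mem_inter_iff, Set.mem_preimage,
        Set.mem_singleton_iff, Set.mem_Ici]
    have h2 : X s ⁻¹' {true} = {ω | X s ω = true} := by ext ω; simp
    have h3 : ℙ (ρ s ⁻¹' Set.Ici (n + 1)) = e n := by
      have := (hρ s).measure_mem_eq (measurableSet_Ici (a := n + 1))
      rw [this, he]
      rfl
    rw [h1, (hpair s).measure_inter_preimage_eq_mul _ _ (measurableSet_singleton true)
      measurableSet_Ici, h2, hX s, h3, heq n, ← ENNReal.ofReal_mul hp.le, hr]
  -- the L-shaped finsets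
  set S : ℕ → Finset (ℕ × ℕ) := fun n =>
    ((Finset.Icc 1 n).image fun k => (k, n)) ∪ ((Finset.Icc 1 (n - 1)).image fun k => (n, k))
    with hS
  have hSmem : ∀ n, 1 ≤ n → ∀ s : ℕ × ℕ,
      s ∈ S n ↔ (1 ≤ s.1 ∧ 1 ≤ s.2 ∧ max s.1 s.2 = n) := by
    intro n hn s
    obtain ⟨a, b⟩ := s
    simp only [hS, Finset.mem_union, Finset.mem_image, Finset.mem_Icc, Prod.mk.injEq]
    constructor
    · rintro (⟨k, ⟨hk1, hk2⟩, rfl, rfl⟩ | ⟨k, ⟨hk1, hk2⟩, rfl, rfl⟩) <;>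
        simp only [max_def] <;> split <;> omega
    · rintro ⟨h1, h2, h3⟩
      simp only [max_def] at h3
      by_cases hab : b = n
      · exact Or.inl ⟨a, by split at h3 <;> omega, rfl, hab.symm⟩
      · exact Or.inr ⟨b, by split at h3 <;> omega, by split at h3 <;> omega, rfl⟩
  have hScard : ∀ n, 1 ≤ n → (S n).card = 2 * n - 1 := by
    intro n hn
    rw [hS]
    have hinj1 : Function.Injective (fun k : ℕ => (k, n)) := fun a b h => by
      simpa using h
    have hinj2 : Function.Injective (fun k : ℕ => (n, k)) := fun a b h => by
      simpa using h
    rw [Finset.card_union_of_disjoint, Finset.card_image_of_injective _ hinj1,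
      Finset.card_image_of_injective _ hinj2, Nat.card_Icc, Nat.card_Icc]
    · omega
    · rw [Finset.disjoint_left]
      rintro ⟨a, b⟩ h1 h2
      simp only [Finset.mem_image, Finset.mem_Icc, Prod.mk.injEq] at h1 h2
      obtain ⟨k, hk, rfl, rfl⟩ := h1
      obtain ⟨k', hk', h, rfl⟩ := h2
      omega
  have hAeq : ∀ n, 1 ≤ n → A n = ⋃ s ∈ S n, B n s := by
    intro n hn
    rw [hA n]
    ext ω
    simp only [Set.mem_iUnion, Set.mem_setOf_eq, hB, exists_prop]
    constructor
    · rintro ⟨s, h1, h2, h3, hx, hrho⟩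
      exact ⟨s, (hSmem n hn s).mpr ⟨h1, h2, h3⟩, hx, hrho⟩
    · rintro ⟨s, hs, hx, hrho⟩
      obtain ⟨h1, h2, h3⟩ := (hSmem n hn s).mp hs
      exact ⟨s, h1, h2, h3, hx, hrho⟩
  have hAmeas : ∀ n, 1 ≤ n → MeasurableSet (A n) := by
    intro n hn
    rw [hAeq n hn]
    exact (S n).measurableSet_biUnion fun s _ => hBm n s
  -- probability of the complement
  have hcomplprob : ∀ n, 1 ≤ n → ℙ ((A n)ᶜ) = ENNReal.ofReal ((1 - r n) ^ (2 * n - 1)) := by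
    intro n hn
    have h1 : (A n)ᶜ = ⋂ s ∈ (S n : Finset (ℕ × ℕ)), (B n s)ᶜ := by
      rw [hAeq n hn, Set.compl_iUnion₂]
    rw [h1, hindep.meas_biInter (fun s _ => (hBcm n s).compl)]
    have hBc : ∀ s, ℙ ((B n s)ᶜ) = ENNReal.ofReal (1 - r n) := by
      intro s
      rw [prob_compl_eq_one_sub (hBm n s), hBprob n s, ENNReal.ofReal_sub 1 (hr0 n),
        ENNReal.ofReal_one]
    rw [Finset.prod_congr rfl fun s _ => hBc s, Finset.prod_const, hScard n hn,
      ← ENNReal.ofReal_pow (by linarith [hr1 n])]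
  have hAprob : ∀ n, 1 ≤ n → ℙ (A n) = ENNReal.ofReal (1 - (1 - r n) ^ (2 * n - 1)) := by
    intro n hn
    have h2 : ℙ (A n) = 1 - ℙ ((A n)ᶜ) := by
      rw [prob_compl_eq_one_sub (hAmeas n hn),
        ENNReal.sub_sub_cancel ENNReal.one_ne_top prob_le_one]
    rw [h2, hcomplprob n hn,
      ENNReal.ofReal_sub 1 (pow_nonneg (by linarith [hr1 n]) _), ENNReal.ofReal_one]
  have hpowle : ∀ n, (1 - r n) ^ (2 * n - 1) ≤ 1 :=
    fun n => pow_le_one₀ (by linarith [hr1 n]) (by linarith [hr0 n])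
  -- part 1
  have part1 : ∀ n : ℕ, 1 ≤ n → (ℙ (A n)).toReal =
      1 - (1 - p * (ℙ {ω | n + 1 ≤ ρ (1, 1) ω}).toReal) ^ (2 * n - 1) := by
    intro n hn
    rw [hAprob n hn, ENNReal.toReal_ofReal (by linarith [hpowle n])]
  -- part 2: independence
  set mY : ℕ × ℕ → MeasurableSpace Ω :=
    fun s => MeasurableSpace.comap (Y s) inferInstance with hmY
  have hle : ∀ s, mY s ≤ (inferInstance : MeasurableSpace Ω) := fun s => (hYm s).comap_le
  have hiI : iIndep mY ℙ := hindep.iIndep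
  set T : ℕ → Set (ℕ × ℕ) := fun n => {s | max s.1 s.2 = n} with hT
  have hblock : ∀ n, 1 ≤ n → MeasurableSet[⨆ s ∈ T n, mY s] (A n) := by
    intro n hn
    rw [hAeq n hn]
    refine MeasurableSet.biUnion (S n).countable_toSet fun s hs => ?_
    have hsT : s ∈ T n := ((hSmem n hn s).mp hs).2.2
    exact (le_iSup₂ (f := fun s _ => mY s) s hsT) _ (hBcm n s)
  have hone : ∀ n : ℕ, 1 ≤ n + 1 := fun n => Nat.succ_le_succ n.zero_le
  have hiset : iIndepSet (fun n : ℕ => A (n + 1)) ℙ := by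
    rw [iIndepSet_iff_meas_biInter fun n => hAmeas (n + 1) (hone n)]
    intro F
    induction F using Finset.cons_induction with
    | empty => simp
    | cons a F ha ih =>
      have hdisj : Disjoint (T (a + 1)) (⋃ n ∈ (F : Set ℕ), T (n + 1)) := by
        rw [Set.disjoint_left]
        rintro s hs1 hs2
        simp only [Set.mem_iUnion, exists_prop] at hs2
        obtain ⟨n, hnF, hsn⟩ := hs2
        rw [hT] at hs1 hsn
        simp only [Set.mem_setOf_eq] at hs1 hsn
        have : a = n := by omega
        exact ha (this ▸ hnF)
      have hindep2 := indep_iSup_of_disjoint hle hiI hdisj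
      have h2 : MeasurableSet[⨆ s ∈ (⋃ n ∈ (F : Set ℕ), T (n + 1)), mY s]
          (⋂ n ∈ F, A (n + 1)) := by
        refine MeasurableSet.biInter F.countable_toSet fun n hn => ?_
        have hmono : (⨆ s ∈ T (n + 1), mY s) ≤
            ⨆ s ∈ (⋃ m ∈ (F : Set ℕ), T (m + 1)), mY s := by
          refine iSup₂_le fun s hs => le_iSup₂ (f := fun s _ => mY s) s ?_
          exact Set.mem_biUnion hn hs
        exact hmono _ (hblock (n + 1) (hone n))
      have key := (Indep_iff _ _ _).mp hindep2 _ _ (hblock (a + 1) (hone a)) h2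
      rw [Finset.cons_eq_insert, Finset.set_biInter_insert, key, ih, Finset.prod_insert ha]
  -- layer cake
  have htail : ∀ n : ℕ, MeasurableSet {ω' | n + 1 ≤ ρ (1, 1) ω'} :=
    fun n => (hρm (1, 1)) (measurableSet_Ici (a := n + 1))
  have hlayer : ∑' n : ℕ, (((2 * n + 1 : ℕ)) : ℝ≥0∞) * e n = ⊤ := by
    have hpt : ∀ ω, ((ρ (1, 1) ω : ℝ≥0∞)) ^ 2 =
        ∑' n : ℕ, Set.indicator {ω' | n + 1 ≤ ρ (1, 1) ω'}
          (fun _ => (((2 * n + 1 : ℕ)) : ℝ≥0∞)) ω := by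
      intro ω
      rw [tsum_eq_sum (s := Finset.range (ρ (1, 1) ω))
        (fun n hn => Set.indicator_of_notMem
          (by simp only [Finset.mem_range, not_lt] at hn; simp only [Set.mem_setOf_eq]; omega) _)]
      rw [Finset.sum_congr rfl fun n hn => Set.indicator_of_mem
        (by simp only [Finset.mem_range] at hn; simp only [Set.mem_setOf_eq]; omega) _]
      rw [← Nat.cast_sum, sum_odd_sq, Nat.cast_pow]
    rw [← hmean, lintegral_congr hpt,
      lintegral_tsum fun n => (measurable_const.indicator (htail n)).aemeasurable]
    exact tsum_congr fun n => by rw [lintegral_indicator_const (htail n), he]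
  -- divergence of the series
  have hsum : ∑' n : ℕ, ℙ (A (n + 1)) = ⊤ := by
    set c : ℕ → ℝ≥0∞ :=
      fun n => ENNReal.ofReal p * ((((2 * n + 1 : ℕ)) : ℝ≥0∞) * e (n + 1)) with hc
    have hcne : ∀ n, c n ≠ ⊤ := fun n =>
      ENNReal.mul_ne_top ENNReal.ofReal_ne_top
        (ENNReal.mul_ne_top (ENNReal.natCast_ne_top _) (hetop (n + 1)))
    have hinner : ∑' n : ℕ, (((2 * n + 1 : ℕ)) : ℝ≥0∞) * e (n + 1) = ⊤ := by
      have h0 : (((2 * 0 + 1 : ℕ)) : ℝ≥0∞) * e 0 ≠ ⊤ :=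
        ENNReal.mul_ne_top (ENNReal.natCast_ne_top _) (hetop 0)
      have hshift : ∑' n : ℕ, (((2 * (n + 1) + 1 : ℕ)) : ℝ≥0∞) * e (n + 1) = ⊤ :=
        ENNReal.tsum_add_one_eq_top hlayer h0
      by_contra hne
      have hle3 : ∀ n : ℕ, (((2 * (n + 1) + 1 : ℕ)) : ℝ≥0∞) * e (n + 1) ≤
          3 * ((((2 * n + 1 : ℕ)) : ℝ≥0∞) * e (n + 1)) := by
        intro n
        rw [← mul_assoc]
        refine mul_le_mul_left ?_ _
        calc ((2 * (n + 1) + 1 : ℕ) : ℝ≥0∞) = ((2 * n + 3 : ℕ) : ℝ≥0∞) := by norm_cast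
          _ ≤ ((3 * (2 * n + 1) : ℕ) : ℝ≥0∞) := by
              exact_mod_cast (by omega : 2 * n + 3 ≤ 3 * (2 * n + 1))
          _ = 3 * ((2 * n + 1 : ℕ) : ℝ≥0∞) := by push_cast; ring
      have h3 : ∑' n : ℕ, (((2 * (n + 1) + 1 : ℕ)) : ℝ≥0∞) * e (n + 1) ≠ ⊤ := by
        refine ne_top_of_le_ne_top ?_ (ENNReal.tsum_le_tsum hle3)
        rw [ENNReal.tsum_mul_left]
        exact ENNReal.mul_ne_top (by norm_num) hne
      exact h3 hshift
    have hcsum : ∑' n, c n = ⊤ := by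
      rw [hc, ENNReal.tsum_mul_left, hinner, ENNReal.mul_top (by
        simp only [ne_eq, ENNReal.ofReal_eq_zero, not_le]; exact hp)]
    have hmin := tsum_min_eq_top hcne hcsum
    have hofmono : Monotone ENNReal.ofReal := fun _ _ h => ENNReal.ofReal_le_ofReal h
    have hlow : ∀ n : ℕ, 2⁻¹ * min (c n) 1 ≤ ℙ (A (n + 1)) := by
      intro n
      have hexp : 2 * (n + 1) - 1 = 2 * n + 1 := by omega
      have hA' := hAprob (n + 1) (hone n)
      rw [hexp] at hA'
      have hcast : c n = ENNReal.ofReal (((2 * n + 1 : ℕ) : ℝ) * r (n + 1)) := by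
        show ENNReal.ofReal p * ((((2 * n + 1 : ℕ)) : ℝ≥0∞) * e (n + 1))
            = ENNReal.ofReal (((2 * n + 1 : ℕ) : ℝ) * r (n + 1))
        rw [heq (n + 1), ← ENNReal.ofReal_natCast (2 * n + 1),
          ← ENNReal.ofReal_mul (Nat.cast_nonneg _), ← ENNReal.ofReal_mul hp.le]
        refine congrArg _ ?_
        show p * ((2 * n + 1 : ℕ) * q (n + 1)) = ((2 * n + 1 : ℕ) : ℝ) * (p * q (n + 1))
        ring
      have h2i : (2⁻¹ : ℝ≥0∞) = ENNReal.ofReal 2⁻¹ := by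
        rw [ENNReal.ofReal_inv_of_pos two_pos, ENNReal.ofReal_ofNat]
      rw [hA', hcast, h2i, ← ENNReal.ofReal_one, ← hofmono.map_min,
        ← ENNReal.ofReal_mul (by norm_num)]
      exact ENNReal.ofReal_le_ofReal (half_min_le (hr0 (n + 1)) (hr1 (n + 1)) (2 * n + 1))
    refine top_le_iff.mp ?_
    calc (⊤ : ℝ≥0∞) = 2⁻¹ * ∑' n, min (c n) 1 := by
          rw [hmin, ENNReal.mul_top (by norm_num)]
      _ = ∑' n, 2⁻¹ * min (c n) 1 := (ENNReal.tsum_mul_left).symm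
      _ ≤ ∑' n, ℙ (A (n + 1)) := ENNReal.tsum_le_tsum hlow
  -- Borel-Cantelli
  have hBC := measure_limsup_eq_one (fun n => hAmeas (n + 1) (hone n)) hiset hsum
  refine ⟨part1, hiset, ?_⟩
  have hlimmeas : MeasurableSet (limsup (fun n => A (n + 1)) atTop) :=
    MeasurableSet.measurableSet_limsup fun n => hAmeas (n + 1) (hone n)
  have hae : ∀ᵐ ω ∂ℙ, ω ∈ limsup (fun n => A (n + 1)) atTop := by
    rw [ae_iff]
    have hcompl : {ω | ¬ ω ∈ limsup (fun n => A (n + 1)) atTop} =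
        (limsup (fun n => A (n + 1)) atTop)ᶜ := rfl
    rw [hcompl, prob_compl_eq_one_sub hlimmeas, hBC, tsub_self]
  filter_upwards [hae] with ω hω
  rw [mem_limsup_iff_frequently_mem, Nat.frequently_atTop_iff_infinite] at hω
  have himg : ((fun n => n + 1) '' {n : ℕ | ω ∈ A (n + 1)}).Infinite :=
    hω.image (add_left_injective 1).injOn
  refine himg.mono ?_
  rintro k ⟨n, hn, rfl⟩
  exact ⟨hone n, hn⟩
end

section
/- Let $G:\mathbb{N}\to[0,1]$ be nonincreasing with $G(t)\to 0$ and $\liminf_{t\to\infty} tG(t) > \eta > 0$; let $p\in(0,1)$, $g(l) = 1 - pG(l)$, and $a$ with $e^{-p\eta} < a < 1$. Then the series $\sum_{t=N}^{\infty} \frac{G(t)}{g(t)} \sum_{i=t+1}^{\infty} \prod_{l=0}^{i-1} g(l)^{2l+1}$ converges, where $N$ is chosen so that $tG(t) > \eta$ and $(1 - p\eta/t)^t < a$ for all $t \ge N$. -/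
open Filter
open scoped ENNReal

/-- Step 7, diagonal sum: Under the stated conditions, the series
`∑_{t≥N} (G(t)/g(t)) ∑_{i≥t+1} ∏_{l=0}^{i-1} g(l)^{2l+1}` converges, where
`g(l) = 1 - p·G(l)` (the outer index is reparametrised as `t = N + t₀` and the
inner one as `i = t + 1 + i₀`). -/
theorem stmt19 (G : ℕ → ℝ) (hG01 : ∀ t, G t ∈ Set.Icc (0 : ℝ) 1)
    (hmono : Antitone G) (hG0 : Tendsto G atTop (nhds 0))
    (p : ℝ) (hp : p ∈ Set.Ioo (0 : ℝ) 1)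
    (η a : ℝ) (hη : 0 < η) (ha1 : Real.exp (-(p * η)) < a) (ha2 : a < 1)
    (hliminf : ENNReal.ofReal η < Filter.atTop.liminf
      (fun t : ℕ => (t : ℝ≥0∞) * ENNReal.ofReal (G t)))
    (N : ℕ) (hN : ∀ t : ℕ, N ≤ t →
      η < (t : ℝ) * G t ∧ (1 - p * η / (t : ℝ)) ^ t < a) :
    Summable (fun t : ℕ =>
      G (N + t) / (1 - p * G (N + t)) *
        ∑' i : ℕ, ∏ l ∈ Finset.range (N + t + 1 + i), (1 - p * G l) ^ (2 * l + 1)) := by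
  obtain ⟨hp0, hp1⟩ := hp
  have ha0 : 0 < a := (Real.exp_pos _).trans ha1
  have hgpos : ∀ l, 1 - p ≤ 1 - p * G l := by
    intro l
    have h0 := (hG01 l).1
    have h1 := (hG01 l).2
    nlinarith
  have hgpos' : ∀ l, 0 < 1 - p * G l := fun l => lt_of_lt_of_le (by linarith) (hgpos l)
  have hgle1 : ∀ l, 1 - p * G l ≤ 1 := by
    intro l; have h0 := (hG01 l).1; nlinarith
  have hN1 : 1 ≤ N := by
    by_contra h
    push_neg at h
    interval_cases N
    have := (hN 0 le_rfl).1
    simp at this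
    linarith
  have key : ∀ l, N ≤ l → (1 - p * G l) ^ (2 * l + 1) ≤ a := by
    intro l hl
    obtain ⟨h1, h2⟩ := hN l hl
    have hl1 : 1 ≤ l := le_trans hN1 hl
    have hlpos : (0:ℝ) < l := by exact_mod_cast hl1
    have hgle : 1 - p * G l ≤ 1 - p * η / l := by
      rw [mul_div_assoc]
      have : η / l < G l := by rw [div_lt_iff₀ hlpos]; linarith
      nlinarith
    have hg0 : 0 ≤ 1 - p * G l := (hgpos' l).le
    calc (1 - p * G l) ^ (2*l+1) ≤ (1 - p * G l) ^ l :=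
          pow_le_pow_of_le_one hg0 (hgle1 l) (by omega)
      _ ≤ (1 - p * η / l) ^ l := pow_le_pow_left₀ hg0 hgle l
      _ ≤ a := h2.le
  have prodnonneg : ∀ s : Finset ℕ, 0 ≤ ∏ l ∈ s, (1 - p * G l) ^ (2 * l + 1) := by
    intro s
    exact Finset.prod_nonneg fun i _ => pow_nonneg (hgpos' i).le _
  have prodN : ∏ l ∈ Finset.range N, (1 - p * G l) ^ (2 * l + 1) ≤ 1 := by
    apply Finset.prod_le_one
    · intro i _; exact pow_nonneg (hgpos' i).le _
    · intro i _; exact pow_le_one₀ (hgpos' i).le (hgle1 i)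
  have prodbound : ∀ m : ℕ,
      ∏ l ∈ Finset.range (N + m), (1 - p * G l) ^ (2 * l + 1) ≤ a ^ m := by
    intro m
    rw [Finset.prod_range_add]
    have h2 : ∏ j ∈ Finset.range m, (1 - p * G (N + j)) ^ (2 * (N + j) + 1) ≤ a ^ m := by
      calc ∏ j ∈ Finset.range m, (1 - p * G (N + j)) ^ (2 * (N + j) + 1)
          ≤ ∏ _j ∈ Finset.range m, a :=
            Finset.prod_le_prod (fun i _ => pow_nonneg (hgpos' _).le _)
              (fun i _ => key (N + i) (Nat.le_add_right _ _))
        _ = a ^ m := by simp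
    have hnn : 0 ≤ ∏ j ∈ Finset.range m, (1 - p * G (N + j)) ^ (2 * (N + j) + 1) :=
      Finset.prod_nonneg fun i _ => pow_nonneg (hgpos' _).le _
    calc (∏ l ∈ Finset.range N, (1 - p * G l) ^ (2 * l + 1)) *
          ∏ j ∈ Finset.range m, (1 - p * G (N + j)) ^ (2 * (N + j) + 1)
        ≤ 1 * (a ^ m) := mul_le_mul prodN h2 hnn zero_le_one
      _ = a ^ m := one_mul _
  have hgeom : Summable (fun i : ℕ => a ^ i) := summable_geometric_of_lt_one ha0.le ha2
  have Pbound : ∀ t i : ℕ,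
      ∏ l ∈ Finset.range (N + t + 1 + i), (1 - p * G l) ^ (2 * l + 1)
        ≤ a ^ (t + 1) * a ^ i := by
    intro t i
    have heq : N + t + 1 + i = N + (t + 1 + i) := by omega
    rw [heq]
    calc _ ≤ a ^ (t + 1 + i) := prodbound (t + 1 + i)
      _ = a ^ (t + 1) * a ^ i := pow_add a (t+1) i
  have hPsummable : ∀ t : ℕ, Summable (fun i : ℕ =>
      ∏ l ∈ Finset.range (N + t + 1 + i), (1 - p * G l) ^ (2 * l + 1)) := by
    intro t
    exact Summable.of_nonneg_of_le (fun i => prodnonneg _) (Pbound t)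
      (hgeom.mul_left (a ^ (t + 1)))
  have tsumbound : ∀ t : ℕ,
      (∑' i : ℕ, ∏ l ∈ Finset.range (N + t + 1 + i), (1 - p * G l) ^ (2 * l + 1))
        ≤ a ^ (t + 1) * (1 - a)⁻¹ := by
    intro t
    calc (∑' i : ℕ, ∏ l ∈ Finset.range (N + t + 1 + i), (1 - p * G l) ^ (2 * l + 1))
        ≤ ∑' i : ℕ, a ^ (t + 1) * a ^ i :=
          Summable.tsum_le_tsum (Pbound t) (hPsummable t) (hgeom.mul_left _)
      _ = a ^ (t + 1) * (1 - a)⁻¹ := by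
          rw [tsum_mul_left, tsum_geometric_of_lt_one ha0.le ha2]
  refine Summable.of_nonneg_of_le ?_ ?_ (hgeom.mul_left ((1 - p)⁻¹ * (a * (1 - a)⁻¹)))
  · intro t
    exact mul_nonneg (div_nonneg (hG01 _).1 (hgpos' _).le)
      (tsum_nonneg fun i => prodnonneg _)
  · intro t
    have h1 : G (N + t) / (1 - p * G (N + t)) ≤ (1 - p)⁻¹ := by
      rw [← one_div]
      exact div_le_div₀ zero_le_one (hG01 _).2 (by linarith) (hgpos _)
    have h2 := tsumbound t
    have h3 : (0:ℝ) ≤ a ^ (t+1) * (1 - a)⁻¹ :=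
      mul_nonneg (pow_nonneg ha0.le _) (inv_nonneg.mpr (by linarith))
    calc G (N + t) / (1 - p * G (N + t)) *
          ∑' i : ℕ, ∏ l ∈ Finset.range (N + t + 1 + i), (1 - p * G l) ^ (2 * l + 1)
        ≤ (1 - p)⁻¹ * (a ^ (t+1) * (1 - a)⁻¹) := by
          apply mul_le_mul h1 h2 (tsum_nonneg fun i => prodnonneg _)
            (inv_nonneg.mpr (by linarith))
      _ = ((1 - p)⁻¹ * (a * (1 - a)⁻¹)) * a ^ t := by ring
end
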